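/- arXiv:1406.2052 — 3 statements merged into one kernel-verified Lean document; each statement's English description precedes it below -/
import Mathlib

section
/- Let Q be a locally point symmetric convex polytope in ℝ^D, and let k ∈ Q − Q. The following statements are equivalent: (i) Q ∩ (Q − k) consists of a single point, i.e., k is a uniquely formed difference in Q − Q; (ii) k is a vertex (extreme point) of the polytope Q − Q; (iii) k = u − v for a pair of strictly antipodal vertices u and v of Q. -/
open scoped Pointwise

noncomputable section

/-- Points of `ℝ^D` with the Euclidean metric. -/
abbrev Pt (D : ℕ) := EuclideanSpace ℝ (Fin D)

/-- `L(S)`: the set of lattice points of `S`, i.e. points of `S` all of whose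
coordinates are integers. -/
def latticePts {D : ℕ} (S : Set (Pt D)) : Set (Pt D) :=
  {x | x ∈ S ∧ ∀ i, ∃ z : ℤ, x i = (z : ℝ)}

/-- A convex polytope: the convex hull of a finite set of points. -/
def IsPolytope {D : ℕ} (P : Set (Pt D)) : Prop :=
  ∃ V : Set (Pt D), V.Finite ∧ P = convexHull ℝ V

/-- A convex polytope whose vertices (extreme points) all lie in `ℤ^D`. -/
def IsLatticePolytope {D : ℕ} (P : Set (Pt D)) : Prop :=
  IsPolytope P ∧ ∀ v ∈ Set.extremePoints ℝ P, ∀ i, ∃ z : ℤ, v i = (z : ℝ)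

/-- `u` and `v` are strictly antipodal vertices of `Q`: there are parallel supporting
hyperplanes `H₁, H₂` of `Q` (with common normal functional `f`) such that
`H₁ ∩ Q = {u}` and `H₂ ∩ Q = {v}`. -/
def StrictlyAntipodal {D : ℕ} (Q : Set (Pt D)) (u v : Pt D) : Prop :=
  ∃ f : Pt D →ₗ[ℝ] ℝ, f ≠ 0 ∧
    {x | x ∈ Q ∧ ∀ y ∈ Q, f y ≤ f x} = {u} ∧
    {x | x ∈ Q ∧ ∀ y ∈ Q, f x ≤ f y} = {v}

/-- The supporting cone of `Q` at `v`: `v + ⋃_{λ ≥ 0} λ (Q - v)`. -/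
def suppCone {D : ℕ} (Q : Set (Pt D)) (v : Pt D) : Set (Pt D) :=
  {v} + ⋃ (l : ℝ) (_ : 0 ≤ l), l • (Q - ({v} : Set (Pt D)))

/-- `Q` is locally point symmetric: its vertices can be partitioned into pairs
(given by a fixed-point-free involution `σ` of the vertex set) of strictly antipodal
vertices such that each pair `{u, v}` satisfies `C(u) - u = v - C(v)`. -/
def LocallyPointSymmetric {D : ℕ} (Q : Set (Pt D)) : Prop :=
  ∃ σ : Pt D → Pt D, ∀ v ∈ Set.extremePoints ℝ Q,
    σ v ∈ Set.extremePoints ℝ Q ∧ σ v ≠ v ∧ σ (σ v) = v ∧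
    StrictlyAntipodal Q v (σ v) ∧
    suppCone Q v - ({v} : Set (Pt D)) = ({σ v} : Set (Pt D)) - suppCone Q (σ v)

/-- `E` is an edge of `Q`: a 1-dimensional face, i.e. the intersection of `Q` with a
supporting hyperplane which is 1-dimensional. -/
def IsEdge {D : ℕ} (Q E : Set (Pt D)) : Prop :=
  (∃ f : Pt D →ₗ[ℝ] ℝ, f ≠ 0 ∧ E = {x | x ∈ Q ∧ ∀ y ∈ Q, f y ≤ f x}) ∧
    Module.finrank ℝ (affineSpan ℝ E).direction = 1

/-- `B_r(Q)`: lattice points of `Q` within distance `r` of some vertex of `Q`. -/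
def ballFringe {D : ℕ} (Q : Set (Pt D)) (r : ℝ) : Set (Pt D) :=
  {q | q ∈ latticePts Q ∧ ∃ v ∈ Set.extremePoints ℝ Q, dist q v ≤ r}

/-- `M_r(Q) = L(Q) \ B_r(Q)`: the middle lattice points of `Q`. -/
def middlePts {D : ℕ} (Q : Set (Pt D)) (r : ℝ) : Set (Pt D) :=
  latticePts Q \ ballFringe Q r

/-- `P` is point symmetric: `P = x - P` for some point `x`. -/
def PointSymmetric {D : ℕ} (P : Set (Pt D)) : Prop :=
  ∃ x : Pt D, P = ({x} : Set (Pt D)) - P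

namespace S17
variable {D : ℕ}

/-- feasible-direction cone of `A` at `x` -/
def cone (A : Set (Pt D)) (x : Pt D) : Set (Pt D) :=
  {z | ∃ l : ℝ, 0 ≤ l ∧ ∃ q ∈ A, z = l • (q - x)}

def shifted (A : Set (Pt D)) (x : Pt D) : Set (Pt D) := (fun q => q - x) '' A

def spanAt (A : Set (Pt D)) (x : Pt D) : Submodule ℝ (Pt D) :=
  Submodule.span ℝ (shifted A x)

def amin (A : Set (Pt D)) (h : Pt D →L[ℝ] ℝ) : Set (Pt D) :=
  {x | x ∈ A ∧ ∀ y ∈ A, h x ≤ h y}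

def amax (A : Set (Pt D)) (h : Pt D →L[ℝ] ℝ) : Set (Pt D) :=
  {x | x ∈ A ∧ ∀ y ∈ A, h y ≤ h x}

lemma amax_eq_amin_neg (A : Set (Pt D)) (h : Pt D →L[ℝ] ℝ) : amax A h = amin A (-h) := by
  ext x; simp [amax, amin, neg_le_neg_iff]

lemma mem_shifted {A : Set (Pt D)} {x z : Pt D} : z ∈ shifted A x ↔ ∃ q ∈ A, q - x = z := by
  simp [shifted]

lemma sub_mem_cone {A : Set (Pt D)} {x q : Pt D} (hq : q ∈ A) : q - x ∈ cone A x :=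
  ⟨1, zero_le_one, q, hq, by simp⟩

lemma zero_mem_cone {A : Set (Pt D)} {x : Pt D} (hx : x ∈ A) : (0 : Pt D) ∈ cone A x :=
  ⟨0, le_rfl, x, hx, by simp⟩

lemma cone_smul_mem {A : Set (Pt D)} {x z : Pt D} {c : ℝ} (hc : 0 ≤ c) (hz : z ∈ cone A x) :
    c • z ∈ cone A x := by
  obtain ⟨l, hl, q, hq, rfl⟩ := hz
  exact ⟨c * l, mul_nonneg hc hl, q, hq, by rw [smul_smul]⟩

lemma cone_convex {A : Set (Pt D)} {x : Pt D} (hA : Convex ℝ A) : Convex ℝ (cone A x) := by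
  rintro z₁ ⟨l₁, hl₁, q₁, hq₁, rfl⟩ z₂ ⟨l₂, hl₂, q₂, hq₂, rfl⟩ a b ha hb hab
  rcases eq_or_lt_of_le (add_nonneg (mul_nonneg ha hl₁) (mul_nonneg hb hl₂)) with h0 | hpos
  · refine ⟨0, le_rfl, q₁, hq₁, ?_⟩
    have h1 : a * l₁ = 0 := by nlinarith [mul_nonneg ha hl₁, mul_nonneg hb hl₂]
    have h2 : b * l₂ = 0 := by nlinarith [mul_nonneg ha hl₁, mul_nonneg hb hl₂]
    rw [smul_smul, smul_smul, h1, h2]; simp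
  · set s := a * l₁ + b * l₂ with hs
    refine ⟨s, le_of_lt hpos, (a * l₁ / s) • q₁ + (b * l₂ / s) • q₂,
      hA hq₁ hq₂ (by positivity) (by positivity) (by field_simp; exact hs.symm), ?_⟩
    have hsne : s ≠ 0 := ne_of_gt hpos
    match_scalars <;> (field_simp; try (rw [hs]; ring))

lemma cone_subset_spanAt {A : Set (Pt D)} {x : Pt D} : cone A x ⊆ (spanAt A x : Set (Pt D)) := by
  rintro z ⟨l, hl, q, hq, rfl⟩
  exact Submodule.smul_mem _ _ (Submodule.subset_span ⟨q, hq, rfl⟩)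

lemma span_cone_eq {A : Set (Pt D)} {x : Pt D} :
    Submodule.span ℝ (cone A x) = spanAt A x := by
  apply le_antisymm
  · rw [Submodule.span_le]; exact cone_subset_spanAt
  · rw [spanAt, Submodule.span_le]
    rintro z ⟨q, hq, rfl⟩
    exact Submodule.subset_span (sub_mem_cone hq)

lemma spanAt_base {A : Set (Pt D)} {x y : Pt D} (hx : x ∈ A) (hy : y ∈ A) :
    spanAt A x = spanAt A y := by
  have key : ∀ a b : Pt D, a ∈ A → b ∈ A → spanAt A a ≤ spanAt A b := by
    intro a b ha hb
    rw [spanAt, Submodule.span_le]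
    rintro z ⟨q, hq, rfl⟩
    have h1 : q - b ∈ spanAt A b := Submodule.subset_span ⟨q, hq, rfl⟩
    have h2 : a - b ∈ spanAt A b := Submodule.subset_span ⟨a, ha, rfl⟩
    have h3 := Submodule.sub_mem _ h1 h2
    simpa [sub_sub_sub_cancel_right] using h3
  exact le_antisymm (key x y hx hy) (key y x hy hx)

lemma mem_spanAt_of_mem {A : Set (Pt D)} {x q : Pt D} (hq : q ∈ A) :
    q - x ∈ spanAt A x := Submodule.subset_span ⟨q, hq, rfl⟩

lemma eq_singleton_of_spanAt_bot {A : Set (Pt D)} {x : Pt D} (hx : x ∈ A)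
    (hb : spanAt A x = ⊥) : A = {x} := by
  apply Set.eq_singleton_iff_unique_mem.2 ⟨hx, ?_⟩
  intro y hy
  have := mem_spanAt_of_mem (x := x) hy
  rw [hb, Submodule.mem_bot, sub_eq_zero] at this
  exact this

lemma le_on_hull {T : Set (Pt D)} {h : Pt D →L[ℝ] ℝ} {c : ℝ} (hc : ∀ v ∈ T, c ≤ h v) :
    ∀ x ∈ convexHull ℝ T, c ≤ h x := by
  have hconv : Convex ℝ {x : Pt D | c ≤ h x} :=
    convex_halfSpace_ge ⟨fun a b => map_add h a b, fun a b => map_smul h a b⟩ c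
  exact fun x hx => convexHull_min hc hconv hx

/-- argmin of a linear functional over a hull of a finite set is the hull of the argmin. -/
lemma argmin_hull {T : Set (Pt D)} (hfin : T.Finite) (hne : T.Nonempty) (h : Pt D →L[ℝ] ℝ) :
    amin (convexHull ℝ T) h = convexHull ℝ (amin T h) := by
  classical
  obtain ⟨F, hF⟩ : ∃ F : Finset (Pt D), (F : Set (Pt D)) = T := ⟨hfin.toFinset, hfin.coe_toFinset⟩
  subst hF
  have hFne : F.Nonempty := by exact_mod_cast hne
  set m := F.inf' hFne h with hm
  obtain ⟨v₀, hv₀F, hv₀⟩ := Finset.exists_mem_eq_inf' hFne h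
  have hminT : ∀ v ∈ (F : Set (Pt D)), m ≤ h v := fun v hv => Finset.inf'_le h (by exact_mod_cast hv)
  have hminhull : ∀ x ∈ convexHull ℝ (F : Set (Pt D)), m ≤ h x := le_on_hull hminT
  have haminT : amin (F : Set (Pt D)) h = {v | v ∈ (F : Set (Pt D)) ∧ h v = m} := by
    ext v
    constructor
    · rintro ⟨hv, hmin⟩
      refine ⟨hv, le_antisymm ?_ (hminT v hv)⟩
      rw [hm, hv₀]
      exact hmin v₀ (by exact_mod_cast hv₀F)
    · rintro ⟨hv, hveq⟩
      exact ⟨hv, fun y hy => hveq ▸ hminT y hy⟩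
  apply Set.Subset.antisymm
  · -- hard direction
    rintro x ⟨hxQ, hxmin⟩
    have hxm : h x = m := le_antisymm
      (by rw [hm, hv₀]; exact hxmin v₀ (subset_convexHull ℝ _ (by exact_mod_cast hv₀F)))
      (hminhull x hxQ)
    rw [Finset.convexHull_eq] at hxQ
    obtain ⟨w, hw0, hw1, hwx⟩ := hxQ
    have hxsum : x = ∑ y ∈ F, w y • y := by
      rw [← hwx, Finset.centerMass_eq_of_sum_1 _ _ hw1]; rfl
    have hhx : ∑ y ∈ F, w y * (h y - m) = 0 := by
      have : h x = ∑ y ∈ F, w y * h y := by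
        rw [hxsum, map_sum]; simp [smul_eq_mul]
      have hsum : ∑ y ∈ F, w y * (h y - m) = (∑ y ∈ F, w y * h y) - m := by
        have e1 : ∑ y ∈ F, w y * (h y - m) = ∑ y ∈ F, (w y * h y - w y * m) := by
          apply Finset.sum_congr rfl; intros; ring
        rw [e1, Finset.sum_sub_distrib, ← Finset.sum_mul, hw1, one_mul]
      rw [hsum, ← this, hxm, sub_self]
    have hzero : ∀ y ∈ F, w y * (h y - m) = 0 := by
      intro y hy
      have := (Finset.sum_eq_zero_iff_of_nonneg (fun y hy => mul_nonneg (hw0 y hy)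
        (sub_nonneg.2 (hminT y (by exact_mod_cast hy))))).1 hhx
      exact this y hy
    set F' := F.filter (fun v => w v ≠ 0) with hF'
    have hsub : (F' : Set (Pt D)) ⊆ amin (F : Set (Pt D)) h := by
      intro v hv
      rw [haminT]
      simp only [hF', Finset.coe_filter, Set.mem_setOf_eq] at hv
      refine ⟨by exact_mod_cast hv.1, ?_⟩
      have := hzero v hv.1
      rcases mul_eq_zero.1 this with h1 | h2
      · exact absurd h1 hv.2
      · linarith [sub_eq_zero.1 h2]
    have hF'ne : ∑ y ∈ F', w y = 1 := by
      rw [hF', Finset.sum_filter_ne_zero, hw1]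
    have hxmem : x ∈ convexHull ℝ (F' : Set (Pt D)) := by
      have hx' : x = F'.centerMass w id := by
        rw [Finset.centerMass_eq_of_sum_1 _ _ hF'ne, hxsum]
        rw [hF']
        rw [Finset.sum_filter_of_ne]
        · rfl
        · intro y _ hne0
          intro hw
          exact hne0 (by rw [hw, zero_smul])
      rw [hx']
      exact Finset.centerMass_mem_convexHull _ (fun i hi => hw0 i (Finset.mem_of_mem_filter i hi))
        (by rw [hF'ne]; norm_num) (fun i hi => by exact_mod_cast hi)
    exact convexHull_mono hsub hxmem
  · -- easy direction
    have hsub2 : amin (F : Set (Pt D)) h ⊆ {x | x ∈ convexHull ℝ (F : Set (Pt D)) ∧ h x = m} := by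
      rw [haminT]; rintro v ⟨hv, hveq⟩; exact ⟨subset_convexHull ℝ _ hv, hveq⟩
    have hconv : Convex ℝ {x : Pt D | x ∈ convexHull ℝ (F : Set (Pt D)) ∧ h x = m} := by
      have h1 : Convex ℝ {x : Pt D | h x = m} :=
        convex_hyperplane ⟨fun a b => map_add h a b, fun a b => map_smul h a b⟩ m
      exact (convex_convexHull ℝ _).inter h1
    intro x hx
    have := convexHull_min hsub2 hconv hx
    exact ⟨this.1, fun y hy => this.2 ▸ hminhull y hy⟩

lemma amin_char {T : Set (Pt D)} (hfin : T.Finite) (hne : T.Nonempty) (h : Pt D →L[ℝ] ℝ) :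
    ∃ m : ℝ, (∀ v ∈ T, m ≤ h v) ∧ (∃ v₀ ∈ T, h v₀ = m) ∧
      amin T h = {v | v ∈ T ∧ h v = m} := by
  classical
  obtain ⟨F, hF⟩ : ∃ F : Finset (Pt D), (F : Set (Pt D)) = T := ⟨hfin.toFinset, hfin.coe_toFinset⟩
  subst hF
  have hFne : F.Nonempty := by exact_mod_cast hne
  set m := F.inf' hFne h with hm
  obtain ⟨v₀, hv₀F, hv₀⟩ := Finset.exists_mem_eq_inf' hFne h
  have hminT : ∀ v ∈ (F : Set (Pt D)), m ≤ h v := fun v hv => Finset.inf'_le h (by exact_mod_cast hv)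
  refine ⟨m, hminT, ⟨v₀, by exact_mod_cast hv₀F, hv₀.symm⟩, ?_⟩
  ext v
  constructor
  · rintro ⟨hv, hmin⟩
    refine ⟨hv, le_antisymm ?_ (hminT v hv)⟩
    rw [hm, hv₀]
    exact hmin v₀ (by exact_mod_cast hv₀F)
  · rintro ⟨hv, hveq⟩
    exact ⟨hv, fun y hy => hveq ▸ hminT y hy⟩

lemma amin_nonempty {T : Set (Pt D)} (hfin : T.Finite) (hne : T.Nonempty) (h : Pt D →L[ℝ] ℝ) :
    (amin T h).Nonempty := by
  obtain ⟨m, h1, ⟨v₀, hv₀, hv₀m⟩, h3⟩ := amin_char hfin hne h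
  exact ⟨v₀, h3 ▸ ⟨hv₀, hv₀m⟩⟩

lemma amin_subset {T : Set (Pt D)} {h : Pt D →L[ℝ] ℝ} : amin T h ⊆ T := fun _ hx => hx.1

lemma amin_finite {T : Set (Pt D)} (hfin : T.Finite) (h : Pt D →L[ℝ] ℝ) : (amin T h).Finite :=
  hfin.subset amin_subset

lemma amin_convex {Q : Set (Pt D)} (hQ : Convex ℝ Q) (h : Pt D →L[ℝ] ℝ) :
    Convex ℝ (amin Q h) := by
  rintro x ⟨hx, hxm⟩ y ⟨hy, hym⟩ a b ha hb hab
  refine ⟨hQ hx hy ha hb hab, fun z hz => ?_⟩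
  have : h (a • x + b • y) = a * h x + b * h y := by
    rw [map_add, map_smul, map_smul]; rfl
  rw [this]
  calc a * h x + b * h y ≤ a * h z + b * h z := by
        apply add_le_add
        · exact mul_le_mul_of_nonneg_left (hxm z hz) ha
        · exact mul_le_mul_of_nonneg_left (hym z hz) hb
    _ = h z := by rw [← add_mul, hab, one_mul]

lemma perturb {T : Set (Pt D)} (hfin : T.Finite) (hne : T.Nonempty) (h f : Pt D →L[ℝ] ℝ) :
    ∃ ε₀ : ℝ, 0 < ε₀ ∧ ∀ ε : ℝ, 0 < ε → ε ≤ ε₀ →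
      amin T (h + ε • f) = amin (amin T h) f := by
  classical
  obtain ⟨m, hmle, ⟨v₀, hv₀T, hv₀m⟩, hchar⟩ := amin_char hfin hne h
  obtain ⟨F, hF⟩ : ∃ F : Finset (Pt D), (F : Set (Pt D)) = T := ⟨hfin.toFinset, hfin.coe_toFinset⟩
  have hFne : F.Nonempty := by rw [← Finset.coe_nonempty] at *; rw [hF]; exact hne
  set M := F.sup' hFne (fun v => |f v|) with hM
  have hMabs : ∀ v ∈ T, |f v| ≤ M := by
    intro v hv
    exact Finset.le_sup' (fun v => |f v|) (by rw [← hF] at hv; exact_mod_cast hv)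
  have hM0 : 0 ≤ M := le_trans (abs_nonneg _) (hMabs v₀ hv₀T)
  by_cases hall : ∀ v ∈ T, h v = m
  · refine ⟨1, one_pos, fun ε hε _ => ?_⟩
    have hTeq : amin T h = T := by
      rw [hchar]; ext v; exact ⟨fun hv => hv.1, fun hv => ⟨hv, hall v hv⟩⟩
    rw [hTeq]
    ext x
    simp only [amin, Set.mem_setOf_eq, ContinuousLinearMap.add_apply,
      ContinuousLinearMap.coe_smul', Pi.smul_apply, smul_eq_mul]
    constructor
    · rintro ⟨hx, hmin⟩
      refine ⟨hx, fun y hy => ?_⟩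
      have := hmin y hy
      rw [hall x hx, hall y hy] at this
      exact le_of_mul_le_mul_left (by linarith) hε
    · rintro ⟨hx, hmin⟩
      refine ⟨hx, fun y hy => ?_⟩
      have := hmin y hy
      rw [hall x hx, hall y hy]
      nlinarith
  · push_neg at hall
    obtain ⟨v₁, hv₁T, hv₁m⟩ := hall
    set R := F.filter (fun v => h v ≠ m) with hR
    have hRne : R.Nonempty := by
      refine ⟨v₁, ?_⟩
      rw [hR, Finset.mem_filter]
      exact ⟨by rw [← hF] at hv₁T; exact_mod_cast hv₁T, hv₁m⟩
    set δ := R.inf' hRne (fun v => h v - m) with hδdef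
    have hδpos : 0 < δ := by
      rw [hδdef, Finset.lt_inf'_iff]
      intro v hv
      rw [hR, Finset.mem_filter] at hv
      have h1 : m ≤ h v := hmle v (by rw [← hF]; exact_mod_cast hv.1)
      have h2 : h v ≠ m := hv.2
      cases lt_or_eq_of_le h1 with
      | inl hlt => linarith
      | inr heq => exact absurd heq.symm h2
    refine ⟨δ / (2 * M + 1), by positivity, fun ε hε hεle => ?_⟩
    have key : ∀ v ∈ T, h v = m → ∀ r ∈ T, h r ≠ m →
        h v + ε * f v < h r + ε * f r := by
      intro v hv hvm r hr hrm
      have hδle : δ ≤ h r - m := by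
        apply Finset.inf'_le
        rw [hR, Finset.mem_filter]
        exact ⟨by rw [← hF] at hr; exact_mod_cast hr, hrm⟩
      have h1 : |f v| ≤ M := hMabs v hv
      have h2 : |f r| ≤ M := hMabs r hr
      have h3 : ε * (f v - f r) ≤ ε * (2 * M) := by
        apply mul_le_mul_of_nonneg_left _ (le_of_lt hε)
        have := abs_le.1 h1; have := abs_le.1 h2; linarith
      have h4 : ε * (2 * M) < δ := by
        calc ε * (2 * M) ≤ δ / (2 * M + 1) * (2 * M) := by
              apply mul_le_mul_of_nonneg_right hεle; linarith
          _ < δ := by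
              rw [div_mul_eq_mul_div, div_lt_iff₀ (by linarith)]
              nlinarith
      rw [hvm]; linarith
    ext x
    constructor
    · rintro ⟨hx, hmin⟩
      have hxm : h x = m := by
        by_contra hxne
        have := key v₀ hv₀T hv₀m x hx hxne
        have h2 := hmin v₀ hv₀T
        simp only [ContinuousLinearMap.add_apply, ContinuousLinearMap.coe_smul',
          Pi.smul_apply, smul_eq_mul] at h2
        linarith
      refine ⟨hchar ▸ ⟨hx, hxm⟩, fun y hy => ?_⟩
      rw [hchar] at hy
      have h2 := hmin y hy.1
      simp only [ContinuousLinearMap.add_apply, ContinuousLinearMap.coe_smul',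
        Pi.smul_apply, smul_eq_mul] at h2
      rw [hxm, hy.2] at h2
      have := le_of_add_le_add_left h2
      exact le_of_mul_le_mul_left this hε
    · rintro ⟨hxa, hxf⟩
      have hx := hchar ▸ hxa
      obtain ⟨hxT, hxm⟩ : x ∈ T ∧ h x = m := hx
      refine ⟨hxT, fun y hy => ?_⟩
      simp only [ContinuousLinearMap.add_apply, ContinuousLinearMap.coe_smul',
        Pi.smul_apply, smul_eq_mul]
      by_cases hym : h y = m
      · have : f x ≤ f y := hxf y (hchar ▸ ⟨hy, hym⟩)
        rw [hxm, hym]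
        nlinarith
      · exact le_of_lt (key x hxT hxm y hy hym)

lemma cone_ker_eq_cone_amin {Q : Set (Pt D)} {h : Pt D →L[ℝ] ℝ} {w : Pt D}
    (hw : w ∈ amin Q h) :
    cone Q w ∩ {z | h z = 0} = cone (amin Q h) w := by
  ext z
  constructor
  · rintro ⟨⟨l, hl, q, hq, rfl⟩, hker⟩
    rcases eq_or_lt_of_le hl with h0 | hpos
    · refine ⟨0, le_rfl, w, hw, ?_⟩
      rw [← h0, zero_smul, zero_smul]
    · have hqval : h q = h w := by
        have : h (l • (q - w)) = l * (h q - h w) := by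
          rw [map_smul, map_sub]; simp [smul_eq_mul]
        rw [Set.mem_setOf_eq, this] at hker
        have := mul_eq_zero.1 hker
        rcases this with h1 | h2
        · exact absurd h1 (ne_of_gt hpos)
        · linarith [sub_eq_zero.1 h2]
      refine ⟨l, hl, q, ⟨hq, fun y hy => hqval ▸ hw.2 y hy⟩, rfl⟩
  · rintro ⟨l, hl, q, hq, rfl⟩
    have hqval : h q = h w := le_antisymm (hq.2 w hw.1) (hw.2 q hq.1)
    constructor
    · exact ⟨l, hl, q, hq.1, rfl⟩
    · rw [Set.mem_setOf_eq, map_smul, map_sub]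
      simp [smul_eq_mul, hqval]

lemma spanAt_min_eq_max {Q V : Set (Pt D)} (hfin : V.Finite) (hne : V.Nonempty)
    (hQ : Q = convexHull ℝ V) (σ : Pt D → Pt D)
    (hσV : ∀ v ∈ V, σ v ∈ V)
    (hσc : ∀ v ∈ V, cone Q (σ v) = -(cone Q v))
    (h : Pt D →L[ℝ] ℝ) {p u : Pt D} (hp : p ∈ amin Q h) (hu : u ∈ amax Q h) :
    spanAt (amax Q h) u = spanAt (amin Q h) p := by
  obtain ⟨m, hmle, ⟨w₀, hw₀V, hw₀m⟩, _⟩ := amin_char hfin hne h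
  have hVQ : V ⊆ Q := hQ ▸ subset_convexHull ℝ V
  have hw₀min : w₀ ∈ amin Q h := by
    refine ⟨hVQ hw₀V, fun y hy => ?_⟩
    rw [hw₀m]
    exact le_on_hull hmle y (hQ ▸ hy)
  have hσmax : σ w₀ ∈ amax Q h := by
    refine ⟨hVQ (hσV w₀ hw₀V), fun q hq => ?_⟩
    have h1 : q - σ w₀ ∈ cone Q (σ w₀) := sub_mem_cone hq
    rw [hσc w₀ hw₀V, Set.mem_neg] at h1
    obtain ⟨l, hl, q', hq', heq⟩ := h1
    have : h (σ w₀ - q) = l * (h q' - h w₀) := by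
      rw [show σ w₀ - q = -(q - σ w₀) by abel, heq, map_smul, map_sub]
      simp [smul_eq_mul]
    have h2 : 0 ≤ h (σ w₀ - q) := by
      rw [this]
      exact mul_nonneg hl (by linarith [hw₀min.2 q' hq'])
    rw [map_sub] at h2
    linarith
  have hmaxmin : amax Q h = amin Q (-h) := amax_eq_amin_neg Q h
  have hA1 : cone Q w₀ ∩ {z | h z = 0} = cone (amin Q h) w₀ := cone_ker_eq_cone_amin hw₀min
  have hσmin : σ w₀ ∈ amin Q (-h) := hmaxmin ▸ hσmax
  have hA2 : cone Q (σ w₀) ∩ {z | (-h) z = 0} = cone (amin Q (-h)) (σ w₀) :=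
    cone_ker_eq_cone_amin hσmin
  have hsetneg : cone Q (σ w₀) ∩ {z | (-h) z = 0} = -(cone Q w₀ ∩ {z | h z = 0}) := by
    rw [hσc w₀ hw₀V]
    ext z
    simp only [Set.mem_inter_iff, Set.mem_neg, Set.mem_setOf_eq,
      ContinuousLinearMap.neg_apply, neg_eq_zero]
    constructor
    · rintro ⟨h1, h2⟩; exact ⟨h1, by rw [map_neg]; simpa using h2⟩
    · rintro ⟨h1, h2⟩; refine ⟨h1, ?_⟩; rw [map_neg] at h2; linarith [neg_eq_zero.1 h2]
  calc spanAt (amax Q h) u = spanAt (amax Q h) (σ w₀) := spanAt_base hu hσmax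
    _ = Submodule.span ℝ (cone (amax Q h) (σ w₀)) := span_cone_eq.symm
    _ = Submodule.span ℝ (cone (amin Q (-h)) (σ w₀)) := by rw [hmaxmin]
    _ = Submodule.span ℝ (-(cone Q w₀ ∩ {z | h z = 0})) := by rw [← hA2, hsetneg]
    _ = Submodule.span ℝ (cone Q w₀ ∩ {z | h z = 0}) := Submodule.span_neg _
    _ = Submodule.span ℝ (cone (amin Q h) w₀) := by rw [hA1]
    _ = spanAt (amin Q h) w₀ := span_cone_eq
    _ = spanAt (amin Q h) p := spanAt_base hw₀min hp

lemma cone_add_mem {A : Set (Pt D)} {x : Pt D} (hA : Convex ℝ A) {a b : Pt D}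
    (ha : a ∈ cone A x) (hb : b ∈ cone A x) : a + b ∈ cone A x := by
  have hmid : (1/2 : ℝ) • a + (1/2 : ℝ) • b ∈ cone A x :=
    cone_convex hA ha hb (by norm_num) (by norm_num) (by norm_num)
  have := cone_smul_mem (by norm_num : (0:ℝ) ≤ 2) hmid
  have heq : (2:ℝ) • ((1/2 : ℝ) • a + (1/2 : ℝ) • b) = a + b := by
    rw [smul_add, smul_smul, smul_smul]; norm_num
  rwa [heq] at this

lemma sep_lemma {F G' : Set (Pt D)} (hFc : Convex ℝ F) (hGc : Convex ℝ G') {p : Pt D}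
    (hpF : p ∈ F) (hpG : p ∈ G') (hsing : F ∩ G' ⊆ {p})
    (hspan : spanAt G' p = spanAt F p) (hneb : spanAt F p ≠ ⊥) :
    ∃ f : Pt D →L[ℝ] ℝ, (∀ x ∈ F, f x ≤ f p) ∧ (∀ y ∈ G', f p ≤ f y) ∧
      ∃ z ∈ spanAt F p, f z ≠ 0 := by
  classical
  set W := spanAt F p with hW
  set C₁ := cone F p with hC₁
  set C₂ := cone G' p with hC₂
  have hC12 : C₁ ∩ C₂ ⊆ {0} := by
    rintro z ⟨⟨l, hl, q, hq, rfl⟩, ⟨l', hl', q', hq', heq'⟩⟩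
    by_contra hz0
    have hlpos : 0 < l := by
      rcases eq_or_lt_of_le hl with h0 | h; · exfalso; apply hz0; rw [← h0, zero_smul]; rfl
      exact h
    have hl'pos : 0 < l' := by
      rcases eq_or_lt_of_le hl' with h0 | h
      · exfalso; apply hz0; rw [heq', ← h0, zero_smul]; rfl
      · exact h
    set t := min l⁻¹ l'⁻¹ with ht
    have htpos : 0 < t := lt_min (inv_pos.2 hlpos) (inv_pos.2 hl'pos)
    have h1 : p + t • (l • (q - p)) ∈ F := by
      have htl : 0 ≤ t * l := le_of_lt (mul_pos htpos hlpos)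
      have htl1 : t * l ≤ 1 := by
        have : t ≤ l⁻¹ := min_le_left _ _
        calc t * l ≤ l⁻¹ * l := mul_le_mul_of_nonneg_right this (le_of_lt hlpos)
          _ = 1 := inv_mul_cancel₀ (ne_of_gt hlpos)
      have := hFc hpF hq (by linarith : (0:ℝ) ≤ 1 - t * l) htl (by ring)
      have heq2 : (1 - t * l) • p + (t * l) • q = p + t • l • (q - p) := by
        module
      rwa [heq2] at this
    have h2 : p + t • (l • (q - p)) ∈ G' := by
      rw [heq']
      have htl : 0 ≤ t * l' := le_of_lt (mul_pos htpos hl'pos)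
      have htl1 : t * l' ≤ 1 := by
        have : t ≤ l'⁻¹ := min_le_right _ _
        calc t * l' ≤ l'⁻¹ * l' := mul_le_mul_of_nonneg_right this (le_of_lt hl'pos)
          _ = 1 := inv_mul_cancel₀ (ne_of_gt hl'pos)
      have := hGc hpG hq' (by linarith : (0:ℝ) ≤ 1 - t * l') htl (by ring)
      have heq2 : (1 - t * l') • p + (t * l') • q' = p + t • l' • (q' - p) := by
        module
      rwa [heq2] at this
    have := hsing ⟨h1, h2⟩
    rw [Set.mem_singleton_iff] at this
    have hz : t • (l • (q - p)) = 0 := by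
      have := congrArg (fun w => w - p) this; simpa using this
    rcases smul_eq_zero.1 hz with h | h
    · exact absurd h (ne_of_gt htpos)
    · exact hz0 h
  have hC₁W : C₁ ⊆ (W : Set (Pt D)) := cone_subset_spanAt
  have hC₂W : C₂ ⊆ (W : Set (Pt D)) := by
    rw [← hspan]; exact cone_subset_spanAt
  set Ct₁ := C₁ + (↑(Wᗮ) : Set (Pt D)) with hCt₁
  set Ct₂ := C₂ + (↑(Wᗮ) : Set (Pt D)) with hCt₂
  have hconv₁ : Convex ℝ Ct₁ := (cone_convex hFc).add (Wᗮ).convex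
  have hconv₂ : Convex ℝ Ct₂ := (cone_convex hGc).add (Wᗮ).convex
  have h0C₁ : (0 : Pt D) ∈ C₁ := zero_mem_cone hpF
  have h0C₂ : (0 : Pt D) ∈ C₂ := zero_mem_cone hpG
  have hsub₁ : C₁ ⊆ Ct₁ := fun z hz => ⟨z, hz, 0, Submodule.zero_mem _, by simp⟩
  have hsub₂ : C₂ ⊆ Ct₂ := fun z hz => ⟨z, hz, 0, Submodule.zero_mem _, by simp⟩
  have hperp₁ : (↑(Wᗮ) : Set (Pt D)) ⊆ Ct₁ := fun z hz => ⟨0, h0C₁, z, hz, by simp⟩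
  have hperp₂ : (↑(Wᗮ) : Set (Pt D)) ⊆ Ct₂ := fun z hz => ⟨0, h0C₂, z, hz, by simp⟩
  have h0Ct₁ : (0 : Pt D) ∈ Ct₁ := hsub₁ h0C₁
  have h0Ct₂ : (0 : Pt D) ∈ Ct₂ := hsub₂ h0C₂
  -- full span
  have hspanC₁ : Submodule.span ℝ C₁ = W := by rw [hC₁, span_cone_eq, hW]
  have hspantop : Submodule.span ℝ Ct₁ = ⊤ := by
    rw [eq_top_iff, ← Submodule.sup_orthogonal_of_hasOrthogonalProjection (K := W)]
    apply sup_le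
    · rw [← hspanC₁]; exact Submodule.span_mono hsub₁
    · rw [← Submodule.span_eq (Wᗮ)]; exact Submodule.span_mono hperp₁
  have hint : (interior Ct₁).Nonempty := by
    rw [hconv₁.interior_nonempty_iff_affineSpan_eq_top,
      AffineSubspace.affineSpan_eq_top_iff_vectorSpan_eq_top_of_nonempty ℝ _ _ ⟨0, h0Ct₁⟩,
      vectorSpan_def, eq_top_iff, ← hspantop]
    apply Submodule.span_mono
    intro z hz
    exact ⟨z, hz, 0, h0Ct₁, by simp⟩
  obtain ⟨a₀, ha₀⟩ := hint
  -- nonzero element of C₂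
  obtain ⟨q₂, hq₂G, hq₂ne⟩ : ∃ q ∈ G', q - p ≠ 0 := by
    by_contra hcon
    push_neg at hcon
    apply hneb
    rw [← hspan, spanAt, eq_bot_iff, Submodule.span_le]
    rintro z ⟨q, hq, rfl⟩
    simp [hcon q hq]
  set w₂ := q₂ - p with hw₂
  have hw₂C₂ : w₂ ∈ C₂ := sub_mem_cone hq₂G
  have hw₂W : w₂ ∈ W := hC₂W hw₂C₂
  -- disjointness of interior Ct₁ and Ct₂
  have hdisj : Disjoint (interior Ct₁) Ct₂ := by
    rw [Set.disjoint_left]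
    rintro x hxint hxCt₂
    obtain ⟨c₀, hc₀, o₀, ho₀, hxd⟩ := hxCt₂
    obtain ⟨δ, hδpos, hball⟩ := Metric.mem_nhds_iff.1 (mem_interior_iff_mem_nhds.1 hxint)
    have hw₂norm : 0 < ‖w₂‖ := norm_pos_iff.2 hq₂ne
    set t₁ := δ / (2 * ‖w₂‖) with ht₁
    have ht₁pos : 0 < t₁ := by positivity
    have hmem : ∀ s : ℝ, 0 < s → s ≤ t₁ → c₀ + s • w₂ = 0 := by
      intro s hs hst
      have hin : x + s • w₂ ∈ Ct₁ := by
        apply hball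
        rw [Metric.mem_ball, dist_eq_norm]
        have he : ‖x + s • w₂ - x‖ = s * ‖w₂‖ := by
          rw [add_sub_cancel_left, norm_smul, Real.norm_eq_abs, abs_of_pos hs]
        rw [he]
        calc s * ‖w₂‖ ≤ t₁ * ‖w₂‖ := mul_le_mul_of_nonneg_right hst (le_of_lt hw₂norm)
          _ = δ / 2 := by rw [ht₁]; field_simp
          _ < δ := by linarith
      obtain ⟨c, hc, o, ho, hd⟩ := hin
      have hdiff : c - c₀ - s • w₂ = o₀ - o := by
        have h1 : c = x + s • w₂ - o := eq_sub_of_add_eq hd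
        have h2 : c₀ = x - o₀ := eq_sub_of_add_eq hxd
        rw [h1, h2]; abel
      have hWmem : c - c₀ - s • w₂ ∈ W :=
        Submodule.sub_mem _ (Submodule.sub_mem _ (hC₁W hc) (hC₂W hc₀))
          (Submodule.smul_mem _ _ hw₂W)
      have hWperp : c - c₀ - s • w₂ ∈ Wᗮ := by
        rw [hdiff]; exact Submodule.sub_mem _ ho₀ ho
      have hbot : c - c₀ - s • w₂ ∈ W ⊓ Wᗮ := Submodule.mem_inf.2 ⟨hWmem, hWperp⟩
      rw [Submodule.inf_orthogonal_eq_bot, Submodule.mem_bot] at hbot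
      have hceq : c = c₀ + s • w₂ := by
        rw [sub_sub, sub_eq_zero] at hbot; exact hbot
      have hcC₂ : c ∈ C₂ := by
        rw [hceq]
        exact cone_add_mem hGc hc₀ (cone_smul_mem (le_of_lt hs) hw₂C₂)
      have := hC12 ⟨hc, hcC₂⟩
      rw [Set.mem_singleton_iff] at this
      rw [← hceq]; exact this
    have e1 := hmem t₁ ht₁pos le_rfl
    have e2 := hmem (t₁ / 2) (by linarith) (by linarith)
    have : (t₁ - t₁ / 2) • w₂ = 0 := by
      have := congrArg₂ (fun a b : Pt D => a - b) e1 e2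
      simp only [sub_self] at this
      rw [sub_smul]
      have h3 : c₀ + t₁ • w₂ - (c₀ + (t₁ / 2) • w₂) = t₁ • w₂ - (t₁ / 2) • w₂ := by abel
      rw [← h3, this]
    rcases smul_eq_zero.1 this with h | h
    · have : t₁ = 0 := by linarith [h]
      exact absurd this (ne_of_gt ht₁pos)
    · exact hq₂ne h
  -- Hahn-Banach separation
  obtain ⟨f, uu, hflt, hfge⟩ :=
    geometric_hahn_banach_open (hconv₁.interior) isOpen_interior hconv₂ hdisj
  have huu0 : uu ≤ 0 := by
    have := hfge 0 h0Ct₂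
    simpa using this
  -- f ≤ uu on Ct₁
  have hfleCt₁ : ∀ x ∈ Ct₁, f x ≤ uu := by
    intro x hx
    by_contra hgt
    push_neg at hgt
    set c := f x - uu with hc
    have hcpos : 0 < c := by linarith
    set s := min (1/2 : ℝ) (c / (1 + |f x - f a₀|)) with hs
    have hspos : 0 < s := by
      apply lt_min (by norm_num)
      positivity
    have hs1 : s < 1 := lt_of_le_of_lt (min_le_left _ _) (by norm_num)
    have hy : s • a₀ + (1 - s) • x ∈ interior Ct₁ := by
      apply hconv₁.openSegment_interior_self_subset_interior ha₀ hx
      exact ⟨s, 1 - s, hspos, by linarith, by ring, rfl⟩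
    have hfy := hflt _ hy
    have hfyval : f (s • a₀ + (1 - s) • x) = s * f a₀ + (1 - s) * f x := by
      rw [map_add, map_smul, map_smul]; rfl
    rw [hfyval] at hfy
    -- s * f a₀ + (1-s) * f x = f x - s*(f x - f a₀) ≥ f x - c = uu
    have habs : s * (f x - f a₀) ≤ c := by
      have h1 : s ≤ c / (1 + |f x - f a₀|) := min_le_right _ _
      have h2 : f x - f a₀ ≤ |f x - f a₀| := le_abs_self _
      have h3 : 0 ≤ |f x - f a₀| := abs_nonneg _
      calc s * (f x - f a₀) ≤ s * |f x - f a₀| :=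
            mul_le_mul_of_nonneg_left h2 (le_of_lt hspos)
        _ ≤ (c / (1 + |f x - f a₀|)) * |f x - f a₀| :=
            mul_le_mul_of_nonneg_right h1 h3
        _ ≤ c := by
            rw [div_mul_eq_mul_div, div_le_iff₀ (by linarith)]
            nlinarith
    nlinarith
  -- f nonneg on Ct₂ via cone property
  have hCt₂smul : ∀ (lam : ℝ), 0 ≤ lam → ∀ z ∈ Ct₂, lam • z ∈ Ct₂ := by
    rintro lam hlam z ⟨cz, hcz, oz, hoz, rfl⟩
    exact ⟨lam • cz, cone_smul_mem hlam hcz, lam • oz, Submodule.smul_mem _ _ hoz,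
      by rw [smul_add]⟩
  have hfge0 : ∀ z ∈ Ct₂, 0 ≤ f z := by
    intro z hz
    by_contra hneg
    push_neg at hneg
    set lam := (-uu + 1) / (-f z) with hlam
    have hlampos : 0 < lam := by
      apply div_pos (by linarith) (by linarith)
    have hle := hfge _ (hCt₂smul lam (le_of_lt hlampos) z hz)
    rw [map_smul] at hle
    simp only [smul_eq_mul] at hle
    have hprod : lam * (-f z) = -uu + 1 :=
      div_mul_cancel₀ _ (by linarith : -f z ≠ 0)
    nlinarith
  -- conclusions
  have hFle : ∀ x ∈ F, f x ≤ f p := by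
    intro x hx
    have := hfleCt₁ _ (hsub₁ (sub_mem_cone hx))
    rw [map_sub] at this
    linarith
  have hGge : ∀ y ∈ G', f p ≤ f y := by
    intro y hy
    have := hfge0 _ (hsub₂ (sub_mem_cone hy))
    rw [map_sub] at this
    linarith
  have hfperp : ∀ z ∈ (↑(Wᗮ) : Set (Pt D)), f z = 0 := by
    intro z hz
    have h1 := hfleCt₁ _ (hperp₁ hz)
    have h2 := hfge0 _ (hperp₂ hz)
    linarith
  obtain ⟨w', hw'W, o', ho'W, ha₀d⟩ := Submodule.exists_add_mem_mem_orthogonal (K := W) a₀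
  have hfa₀ : f a₀ < 0 := lt_of_lt_of_le (hflt a₀ ha₀) huu0
  refine ⟨f, hFle, hGge, w', hw'W, ?_⟩
  intro hzero
  rw [ha₀d, map_add, hzero, hfperp o' ho'W] at hfa₀
  norm_num at hfa₀

lemma amin_zero (Q : Set (Pt D)) : amin Q (0 : Pt D →L[ℝ] ℝ) = Q := by
  ext x; simp [amin]

lemma amax_zero (Q : Set (Pt D)) : amax Q (0 : Pt D →L[ℝ] ℝ) = Q := by
  ext x; simp [amax]

lemma amax_convex {Q : Set (Pt D)} (hQ : Convex ℝ Q) (h : Pt D →L[ℝ] ℝ) :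
    Convex ℝ (amax Q h) := by
  rw [amax_eq_amin_neg]; exact amin_convex hQ _

lemma rec_finish {Q V : Set (Pt D)} (hfin : V.Finite) (hne : V.Nonempty)
    (hQ : Q = convexHull ℝ V) (σ : Pt D → Pt D)
    (hσV : ∀ v ∈ V, σ v ∈ V)
    (hσc : ∀ v ∈ V, cone Q (σ v) = -(cone Q v))
    {k p u : Pt D} (hk0 : k ≠ 0) (hu : u = p + k)
    (h : Pt D →L[ℝ] ℝ) (hp : p ∈ amin Q h) (humem : u ∈ amax Q h)
    (hbot : spanAt (amin Q h) p = ⊥) :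
    ∃ f : Pt D →L[ℝ] ℝ, f ≠ 0 ∧ amax Q f = {u} ∧ amin Q f = {p} := by
  have hF : amin Q h = {p} := eq_singleton_of_spanAt_bot hp hbot
  have hGspan : spanAt (amax Q h) u = ⊥ := by
    rw [spanAt_min_eq_max hfin hne hQ σ hσV hσc h hp humem, hbot]
  have hG : amax Q h = {u} := eq_singleton_of_spanAt_bot humem hGspan
  refine ⟨h, ?_, hG, hF⟩
  intro h0
  rw [h0, amin_zero] at hF
  rw [h0, amax_zero] at hG
  apply hk0
  have hpu : p = u := by
    have h1 : u ∈ Q := by rw [hG]; rfl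
    rw [hF] at h1
    exact (Set.mem_singleton_iff.1 h1).symm
  rw [hu] at hpu
  have := congrArg (fun w => w - p) hpu
  simpa using this.symm

lemma recursion {Q V : Set (Pt D)} (hfin : V.Finite) (hne : V.Nonempty)
    (hQ : Q = convexHull ℝ V) (hQconv : Convex ℝ Q) (σ : Pt D → Pt D)
    (hσV : ∀ v ∈ V, σ v ∈ V)
    (hσc : ∀ v ∈ V, cone Q (σ v) = -(cone Q v))
    {k p u : Pt D} (hk0 : k ≠ 0) (hu : u = p + k)
    (hsing : ∀ x ∈ Q, x + k ∈ Q → x = p) :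
    ∀ n : ℕ, ∀ h : Pt D →L[ℝ] ℝ, p ∈ amin Q h → u ∈ amax Q h →
      Module.finrank ℝ (spanAt (amin Q h) p) ≤ n →
      ∃ f : Pt D →L[ℝ] ℝ, f ≠ 0 ∧ amax Q f = {u} ∧ amin Q f = {p} := by
  intro n
  induction n with
  | zero =>
    intro h hp humem hrank
    apply rec_finish hfin hne hQ σ hσV hσc hk0 hu h hp humem
    exact Submodule.finrank_eq_zero.1 (Nat.le_zero.1 hrank)
  | succ n ih =>
    intro h hp humem hrank
    by_cases hbot : spanAt (amin Q h) p = ⊥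
    · exact rec_finish hfin hne hQ σ hσV hσc hk0 hu h hp humem hbot
    · set F := amin Q h with hFdef
      set G := amax Q h with hGdef
      have hFconv : Convex ℝ F := amin_convex hQconv h
      have hGconv : Convex ℝ G := amax_convex hQconv h
      set G' := (fun y => y - k) '' G with hG'def
      have hG'conv : Convex ℝ G' := by
        have himg : G' = (fun z => -k + z) '' G := by
          ext z
          constructor
          · rintro ⟨y, hy, rfl⟩; exact ⟨y, hy, by abel⟩
          · rintro ⟨y, hy, rfl⟩; exact ⟨y, hy, by abel⟩
        rw [himg]
        exact hGconv.translate (-k)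
      have hpG' : p ∈ G' := ⟨u, humem, by simp [hu]⟩
      have hFQ : F ⊆ Q := amin_subset
      have hGQ : G ⊆ Q := fun x hx => hx.1
      have hsing' : F ∩ G' ⊆ {p} := by
        rintro x ⟨hxF, ⟨y, hyG, rfl⟩⟩
        have h1 : y - k ∈ Q := hFQ hxF
        have h2 : y - k + k ∈ Q := by
          rw [sub_add_cancel]; exact hGQ hyG
        exact hsing _ h1 h2
      have hshift : shifted G' p = shifted G u := by
        ext z
        constructor
        · rintro ⟨y', ⟨g, hg, rfl⟩, rfl⟩
          exact ⟨g, hg, by rw [hu]; beta_reduce; abel⟩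
        · rintro ⟨g, hg, rfl⟩
          exact ⟨g - k, ⟨g, hg, rfl⟩, by rw [hu]; abel⟩
      have hspaneq : spanAt G' p = spanAt F p := by
        rw [spanAt, hshift, ← spanAt]
        exact spanAt_min_eq_max hfin hne hQ σ hσV hσc h hp humem
      obtain ⟨f', hf'F, hf'G, z₀, hz₀W, hz₀ne⟩ :=
        sep_lemma hFconv hG'conv hp hpG' hsing' hspaneq hbot
      obtain ⟨ε₁, hε₁pos, hε₁⟩ := perturb hfin hne h (-f')
      obtain ⟨ε₂, hε₂pos, hε₂⟩ := perturb hfin hne (-h) f'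
      set ε := min ε₁ ε₂ with hεdef
      have hεpos : 0 < ε := lt_min hε₁pos hε₂pos
      set h' := h + ε • (-f') with hh'def
      have hVmin : amin Q h = convexHull ℝ (amin V h) := by
        rw [hQ]; exact argmin_hull hfin hne h
      have hVmax : amin Q (-h) = convexHull ℝ (amin V (-h)) := by
        rw [hQ]; exact argmin_hull hfin hne (-h)
      have haminVfin : (amin V h).Finite := amin_finite hfin h
      have haminVne : (amin V h).Nonempty := amin_nonempty hfin hne h
      have haminVfin' : (amin V (-h)).Finite := amin_finite hfin (-h)
      have haminVne' : (amin V (-h)).Nonempty := amin_nonempty hfin hne (-h)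
      -- lift 1 : amin Q h' = amin F (-f')
      have lift1 : amin Q h' = amin F (-f') := by
        calc amin Q h' = convexHull ℝ (amin V h') := by
              rw [hQ]; exact argmin_hull hfin hne h'
          _ = convexHull ℝ (amin (amin V h) (-f')) := by
              rw [hε₁ ε hεpos (min_le_left _ _)]
          _ = amin (convexHull ℝ (amin V h)) (-f') :=
              (argmin_hull haminVfin haminVne (-f')).symm
          _ = amin F (-f') := by rw [hFdef, hVmin]
      -- lift 2 : amax Q h' = amin G f'
      have hnegh' : -h' = -h + ε • f' := by
        ext x
        simp [hh'def]
        ring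
      have lift2 : amax Q h' = amin G f' := by
        calc amax Q h' = amin Q (-h') := amax_eq_amin_neg Q h'
          _ = convexHull ℝ (amin V (-h')) := by
              rw [hQ]; exact argmin_hull hfin hne (-h')
          _ = convexHull ℝ (amin (amin V (-h)) f') := by
              rw [hnegh', hε₂ ε hεpos (min_le_right _ _)]
          _ = amin (convexHull ℝ (amin V (-h))) f' :=
              (argmin_hull haminVfin' haminVne' f').symm
          _ = amin (amin Q (-h)) f' := by rw [hVmax]
          _ = amin G f' := by rw [hGdef, amax_eq_amin_neg]
      have hpnew : p ∈ amin Q h' := by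
        rw [lift1]
        refine ⟨hp, fun x hx => ?_⟩
        simp only [ContinuousLinearMap.neg_apply, neg_le_neg_iff]
        exact hf'F x hx
      have hunew : u ∈ amax Q h' := by
        rw [lift2]
        refine ⟨humem, fun g hg => ?_⟩
        have h1 : f' p ≤ f' (g - k) := hf'G _ ⟨g, hg, rfl⟩
        rw [map_sub] at h1
        have h2 : f' u = f' p + f' k := by rw [hu, map_add]
        linarith
      -- rank decrease
      have hle : spanAt (amin Q h') p ≤ spanAt F p ⊓ LinearMap.ker (f' : Pt D →ₗ[ℝ] ℝ) := by
        rw [spanAt, Submodule.span_le]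
        rintro z ⟨x, hx, rfl⟩
        rw [lift1] at hx
        refine Submodule.mem_inf.2 ⟨mem_spanAt_of_mem (amin_subset hx), ?_⟩
        have hp' : p ∈ amin F (-f') := by rw [← lift1]; exact hpnew
        have h1 : f' x = f' p := by
          have ha := hx.2 p hp
          have hb := hp'.2 x hx.1
          simp only [ContinuousLinearMap.neg_apply, neg_le_neg_iff] at ha hb
          linarith
        simp only [LinearMap.mem_ker]
        rw [ContinuousLinearMap.coe_coe, map_sub, h1, sub_self]
      have hlt : spanAt F p ⊓ LinearMap.ker (f' : Pt D →ₗ[ℝ] ℝ) < spanAt F p := by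
        apply lt_of_le_of_ne inf_le_left
        intro heq
        apply hz₀ne
        have : z₀ ∈ spanAt F p ⊓ LinearMap.ker (f' : Pt D →ₗ[ℝ] ℝ) := heq.symm ▸ hz₀W
        have := (Submodule.mem_inf.1 this).2
        simpa using this
      have hranknew : Module.finrank ℝ (spanAt (amin Q h') p) ≤ n := by
        have h1 : Module.finrank ℝ (spanAt (amin Q h') p) ≤
            Module.finrank ℝ (spanAt F p ⊓ LinearMap.ker (f' : Pt D →ₗ[ℝ] ℝ) : Submodule ℝ (Pt D)) :=
          Submodule.finrank_mono hle
        have h2 := Submodule.finrank_lt_finrank_of_lt hlt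
        omega
      exact ih h' hpnew hunew hranknew

lemma mem_sub_singleton {Q : Set (Pt D)} {k x : Pt D} :
    x ∈ Q - ({k} : Set (Pt D)) ↔ x + k ∈ Q := by
  constructor
  · rintro ⟨a, ha, b, hb, hab⟩
    rw [Set.mem_singleton_iff] at hb
    subst hb
    rw [← hab, sub_add_cancel]
    exact ha
  · intro hx
    exact ⟨x + k, hx, k, rfl, add_sub_cancel_right x k⟩

lemma mem_sub_self {Q R : Set (Pt D)} {x : Pt D} :
    x ∈ Q - R ↔ ∃ a ∈ Q, ∃ b ∈ R, a - b = x := Set.mem_sub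

lemma suppCone_iUnion_eq (Q : Set (Pt D)) (v : Pt D) :
    (⋃ (l : ℝ) (_ : 0 ≤ l), l • (Q - ({v} : Set (Pt D)))) = cone Q v := by
  ext z
  simp only [Set.mem_iUnion, Set.mem_smul_set, cone, Set.mem_setOf_eq]
  constructor
  · rintro ⟨l, hl, w, hw, rfl⟩
    obtain ⟨a, ha, b, hb, hab⟩ := hw
    rw [Set.mem_singleton_iff] at hb
    subst hb
    have hab' : a - b = w := hab
    exact ⟨l, hl, a, ha, by rw [hab']⟩
  · rintro ⟨l, hl, q, hq, rfl⟩
    exact ⟨l, hl, q - v, ⟨q, hq, v, rfl, rfl⟩, rfl⟩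

lemma suppCone_sub_self (Q : Set (Pt D)) (v : Pt D) :
    suppCone Q v - ({v} : Set (Pt D)) = cone Q v := by
  rw [suppCone, suppCone_iUnion_eq]
  ext z
  constructor
  · rintro ⟨a, ha, b, hb, hab⟩
    rw [Set.mem_singleton_iff] at hb
    subst hb
    obtain ⟨s, hs, w, hw, hsw⟩ := ha
    rw [Set.mem_singleton_iff] at hs
    subst hs
    have hsw' : s + w = a := hsw
    have hab' : a - s = z := hab
    have : z = w := by rw [← hab', ← hsw']; module
    rwa [this]
  · intro hz
    exact ⟨v + z, ⟨v, rfl, z, hz, rfl⟩, v, rfl, add_sub_cancel_left v z⟩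

lemma singleton_sub_suppCone (Q : Set (Pt D)) (v : Pt D) :
    ({v} : Set (Pt D)) - suppCone Q v = -(cone Q v) := by
  rw [suppCone, suppCone_iUnion_eq]
  ext z
  constructor
  · rintro ⟨a, ha, b, hb, hab⟩
    rw [Set.mem_singleton_iff] at ha
    subst ha
    obtain ⟨s, hs, w, hw, hsw⟩ := hb
    rw [Set.mem_singleton_iff] at hs
    subst hs
    rw [Set.mem_neg]
    have hsw' : s + w = b := hsw
    have hab' : s - b = z := hab
    have : -z = w := by rw [← hab', ← hsw']; module
    rwa [this]
  · intro hz
    rw [Set.mem_neg] at hz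
    refine ⟨v, rfl, v + -z, ⟨v, rfl, -z, hz, rfl⟩, ?_⟩
    show v - (v + -z) = z
    module

lemma combo_max_eq {a b fx₁ fx₂ fu : ℝ} (ha : 0 < a) (hb : 0 < b) (hab : a + b = 1)
    (hfu : fu = a * fx₁ + b * fx₂) (h1 : fx₁ ≤ fu) (h2 : fx₂ ≤ fu) :
    fx₁ = fu ∧ fx₂ = fu := by
  have hsum : a * fu + b * fu = fu := by rw [← add_mul, hab, one_mul]
  constructor
  · by_contra hne
    have hlt : fx₁ < fu := lt_of_le_of_ne h1 hne
    have e1 : a * fx₁ < a * fu := mul_lt_mul_of_pos_left hlt ha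
    have e2 : b * fx₂ ≤ b * fu := mul_le_mul_of_nonneg_left h2 hb.le
    linarith
  · by_contra hne
    have hlt : fx₂ < fu := lt_of_le_of_ne h2 hne
    have e1 : b * fx₂ < b * fu := mul_lt_mul_of_pos_left hlt hb
    have e2 : a * fx₁ ≤ a * fu := mul_le_mul_of_nonneg_left h1 ha.le
    linarith

lemma extreme_of_amax {Q : Set (Pt D)} {f : Pt D →L[ℝ] ℝ} {u : Pt D}
    (h : amax Q f = {u}) : u ∈ Set.extremePoints ℝ Q := by
  have humem : u ∈ amax Q f := by rw [h]; rfl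
  refine ⟨humem.1, fun x₁ hx₁ x₂ hx₂ hseg => ?_⟩
  obtain ⟨a, b, ha, hb, hab, hcomb⟩ := hseg
  have hfu : f u = a * f x₁ + b * f x₂ := by
    rw [← hcomb, map_add, map_smul, map_smul]; rfl
  have h1 : f x₁ ≤ f u := humem.2 x₁ hx₁
  have h2 : f x₂ ≤ f u := humem.2 x₂ hx₂
  obtain ⟨hx₁eq, hx₂eq⟩ := combo_max_eq ha hb hab hfu h1 h2
  refine (?_ : x₁ = u ∧ x₂ = u).1
  constructor
  · have : x₁ ∈ amax Q f := ⟨hx₁, fun y hy => hx₁eq ▸ humem.2 y hy⟩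
    rw [h] at this; exact this
  · have : x₂ ∈ amax Q f := ⟨hx₂, fun y hy => hx₂eq ▸ humem.2 y hy⟩
    rw [h] at this; exact this

lemma extreme_of_amin {Q : Set (Pt D)} {f : Pt D →L[ℝ] ℝ} {v : Pt D}
    (h : amin Q f = {v}) : v ∈ Set.extremePoints ℝ Q := by
  apply extreme_of_amax (f := -f)
  rw [amax_eq_amin_neg, neg_neg]
  exact h

/-- (i) implies (iii). -/
lemma e3 {Q : Set (Pt D)} (hQ : IsPolytope Q) (hlps : LocallyPointSymmetric Q)
    {k : Pt D} (hk : k ∈ Q - Q) {p : Pt D}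
    (hsing : Q ∩ (Q - ({k} : Set (Pt D))) = {p}) :
    ∃ u v : Pt D, u ∈ Set.extremePoints ℝ Q ∧ v ∈ Set.extremePoints ℝ Q ∧
      StrictlyAntipodal Q u v ∧ k = u - v := by
  classical
  obtain ⟨V₀, hV₀fin, hV₀⟩ := hQ
  obtain ⟨σ, hσ⟩ := hlps
  have hQconv : Convex ℝ Q := hV₀ ▸ convex_convexHull ℝ V₀
  have hQcomp : IsCompact Q := hV₀ ▸ hV₀fin.isCompact_convexHull ℝ
  set V := Set.extremePoints ℝ Q with hVdef
  have hfin : V.Finite := hV₀fin.subset (by rw [hVdef, hV₀]; exact extremePoints_convexHull_subset)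
  have hhull : Q = convexHull ℝ V := by
    have hKM := closure_convexHull_extremePoints hQcomp hQconv
    have hclosed : IsClosed (convexHull ℝ V) := (hfin.isCompact_convexHull ℝ).isClosed
    rw [← hKM, hclosed.closure_eq]
  obtain ⟨a, haQ, b, hbQ, hab⟩ := hk
  have hne : V.Nonempty := by
    rcases Set.eq_empty_or_nonempty V with hemp | hne
    · exfalso
      rw [hemp, convexHull_empty] at hhull
      rw [hhull] at haQ
      exact haQ
    · exact hne
  -- k ≠ 0
  have hk0 : k ≠ 0 := by
    intro h0
    subst h0
    have hQp : Q = {p} := by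
      rw [← hsing]
      ext x
      simp only [Set.mem_inter_iff, mem_sub_singleton, add_zero, and_self]
    obtain ⟨v₀, hv₀⟩ := hne
    have h1 := hσ v₀ hv₀
    have hv₀p : v₀ = p := by
      have := hv₀.1; rw [hQp] at this; exact this
    have hσv₀ : σ v₀ = p := by
      have := (h1.1).1; rw [hQp] at this; exact this
    exact h1.2.1 (by rw [hσv₀, hv₀p])
  -- p and u
  have hab' : a - b = k := hab
  have hbk : b + k = a := by rw [← hab']; module
  have hbp : b = p := by
    have : b ∈ Q ∩ (Q - ({k} : Set (Pt D))) := by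
      refine ⟨hbQ, mem_sub_singleton.2 ?_⟩
      rw [hbk]; exact haQ
    rw [hsing] at this; exact this
  have hpQ : p ∈ Q := hbp ▸ hbQ
  set u := p + k with hu
  have huQ : u ∈ Q := by
    have : u = a := by rw [hu, ← hbp, ← hbk]
    rw [this]; exact haQ
  have hsing' : ∀ x ∈ Q, x + k ∈ Q → x = p := by
    intro x hx hxk
    have : x ∈ Q ∩ (Q - ({k} : Set (Pt D))) := ⟨hx, mem_sub_singleton.2 hxk⟩
    rw [hsing] at this; exact this
  -- σ cone properties
  have hσV : ∀ v ∈ V, σ v ∈ V := fun v hv => (hσ v hv).1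
  have hσc : ∀ v ∈ V, cone Q (σ v) = -(cone Q v) := by
    intro v hv
    have h1 := (hσ v hv).2.2.2.2
    rw [suppCone_sub_self, singleton_sub_suppCone] at h1
    rw [h1, neg_neg]
  -- apply the recursion with h = 0
  have hp0 : p ∈ amin Q (0 : Pt D →L[ℝ] ℝ) := ⟨hpQ, fun y _ => le_refl 0⟩
  have hu0 : u ∈ amax Q (0 : Pt D →L[ℝ] ℝ) := ⟨huQ, fun y _ => le_refl 0⟩
  have hrank : Module.finrank ℝ (spanAt (amin Q (0 : Pt D →L[ℝ] ℝ)) p) ≤ D := by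
    have h1 := Submodule.finrank_le (spanAt (amin Q (0 : Pt D →L[ℝ] ℝ)) p)
    rwa [finrank_euclideanSpace_fin] at h1
  obtain ⟨f, hf0, hmax, hmin⟩ :=
    recursion hfin hne hhull hQconv σ hσV hσc hk0 hu hsing' D 0 hp0 hu0 hrank
  refine ⟨u, p, extreme_of_amax hmax, extreme_of_amin hmin, ?_, by rw [hu]; abel⟩
  refine ⟨(f : Pt D →ₗ[ℝ] ℝ), ?_, ?_, ?_⟩
  · intro hcoe
    exact hf0 (ContinuousLinearMap.coe_injective hcoe)
  · exact hmax
  · exact hmin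

/-- (ii) implies (i). -/
lemma e1 {Q : Set (Pt D)} {k : Pt D} (hk : k ∈ Q - Q)
    (hext : k ∈ Set.extremePoints ℝ (Q - Q)) :
    ∃ p : Pt D, Q ∩ (Q - ({k} : Set (Pt D))) = {p} := by
  obtain ⟨a, haQ, b, hbQ, hab⟩ := hk
  refine ⟨b, ?_⟩
  ext x
  simp only [Set.mem_inter_iff, mem_sub_singleton, Set.mem_singleton_iff]
  constructor
  · rintro ⟨hxQ, hxkQ⟩
    set k₁ := (x + k) - b with hk₁
    set k₂ := a - x with hk₂
    have hk₁mem : k₁ ∈ Q - Q := ⟨x + k, hxkQ, b, hbQ, rfl⟩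
    have hk₂mem : k₂ ∈ Q - Q := ⟨a, haQ, x, hxQ, rfl⟩
    have hkseg : k ∈ openSegment ℝ k₁ k₂ := by
      refine ⟨1/2, 1/2, by norm_num, by norm_num, by norm_num, ?_⟩
      have hsum : k₁ + k₂ = k + k := by
        rw [hk₁, hk₂, ← hab]; beta_reduce; abel
      have : (1/2 : ℝ) • k₁ + (1/2 : ℝ) • k₂ = (1/2 : ℝ) • (k₁ + k₂) := by
        rw [smul_add]
      rw [this, hsum, smul_add]
      norm_num
      module
    have := (hext.2 hk₁mem hk₂mem hkseg)
    rw [hk₁] at this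
    have h2 : x + k - b = k := this
    have : x - b = 0 := by
      have := congrArg (fun w => w - k) h2
      simpa [sub_sub, add_sub_cancel] using this
    rw [sub_eq_zero] at this
    exact this
  · rintro rfl
    refine ⟨hbQ, ?_⟩
    have hab' : a - x = k := hab
    have : x + k = a := by rw [← hab']; module
    rw [this]; exact haQ

/-- (iii) implies (ii). -/
lemma e2 {Q : Set (Pt D)} {k : Pt D}
    (h : ∃ u v : Pt D, u ∈ Set.extremePoints ℝ Q ∧ v ∈ Set.extremePoints ℝ Q ∧
      StrictlyAntipodal Q u v ∧ k = u - v) :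
    k ∈ Set.extremePoints ℝ (Q - Q) := by
  obtain ⟨u, v, _, _, ⟨f, hf0, hmax, hmin⟩, rfl⟩ := h
  have humem : u ∈ Q ∧ ∀ y ∈ Q, f y ≤ f u := by
    have : u ∈ {x | x ∈ Q ∧ ∀ y ∈ Q, f y ≤ f x} := by rw [hmax]; rfl
    exact this
  have hvmem : v ∈ Q ∧ ∀ y ∈ Q, f v ≤ f y := by
    have : v ∈ {x | x ∈ Q ∧ ∀ y ∈ Q, f x ≤ f y} := by rw [hmin]; rfl
    exact this
  have hkmem : u - v ∈ Q - Q := ⟨u, humem.1, v, hvmem.1, rfl⟩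
  refine ⟨hkmem, fun x₁ hx₁ x₂ hx₂ hseg => ?_⟩
  have hbound : ∀ x ∈ Q - Q, f x ≤ f (u - v) := by
    rintro x ⟨c, hc, d, hd, rfl⟩
    rw [map_sub, map_sub]
    have := humem.2 c hc
    have := hvmem.2 d hd
    linarith
  obtain ⟨a, b, ha, hb, hab, hcomb⟩ := hseg
  have hfk : f (u - v) = a * f x₁ + b * f x₂ := by
    rw [← hcomb, map_add, map_smul, map_smul]; rfl
  have h1 : f x₁ ≤ f (u - v) := hbound x₁ hx₁
  have h2 : f x₂ ≤ f (u - v) := hbound x₂ hx₂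
  obtain ⟨hx₁eq, hx₂eq⟩ := combo_max_eq ha hb hab hfk h1 h2
  have key : ∀ x ∈ Q - Q, f x = f (u - v) → x = u - v := by
    rintro x ⟨c, hc, d, hd, rfl⟩ hfx
    rw [map_sub, map_sub] at hfx
    have hcle := humem.2 c hc
    have hdge := hvmem.2 d hd
    have hcu : f c = f u := by linarith
    have hdv : f d = f v := by linarith
    have hcmem : c ∈ {x | x ∈ Q ∧ ∀ y ∈ Q, f y ≤ f x} :=
      ⟨hc, fun y hy => hcu ▸ humem.2 y hy⟩
    have hdmem : d ∈ {x | x ∈ Q ∧ ∀ y ∈ Q, f x ≤ f y} :=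
      ⟨hd, fun y hy => hdv ▸ hvmem.2 y hy⟩
    rw [hmax] at hcmem
    rw [hmin] at hdmem
    rw [Set.mem_singleton_iff] at hcmem hdmem
    rw [hcmem, hdmem]
  exact key x₁ hx₁ hx₁eq

end S17

/-- Let `Q` be a locally point symmetric convex polytope and
`k ∈ Q - Q`. Then the following are equivalent: (i) `Q ∩ (Q - k)` is a single point
(i.e. `k` is a uniquely formed difference); (ii) `k` is a vertex (extreme point) of
`Q - Q`; (iii) `k = u - v` for a pair of strictly antipodal vertices `u, v` of `Q`. -/
theorem stmt17 {D : ℕ} (Q : Set (Pt D)) (hQ : IsPolytope Q)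
    (hlps : LocallyPointSymmetric Q) (k : Pt D) (hk : k ∈ Q - Q) :
    ((∃ p : Pt D, Q ∩ (Q - ({k} : Set (Pt D))) = {p}) ↔
        k ∈ Set.extremePoints ℝ (Q - Q)) ∧
    (k ∈ Set.extremePoints ℝ (Q - Q) ↔
      ∃ u v : Pt D, u ∈ Set.extremePoints ℝ Q ∧ v ∈ Set.extremePoints ℝ Q ∧
        StrictlyAntipodal Q u v ∧ k = u - v) := by
  constructor
  · constructor
    · rintro ⟨p, hp⟩
      exact S17.e2 (S17.e3 hQ hlps hk hp)
    · exact fun h2 => S17.e1 hk h2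
  · constructor
    · intro h2
      obtain ⟨p, hp⟩ := S17.e1 hk h2
      exact S17.e3 hQ hlps hk hp
    · exact S17.e2
end
end

section
/- Let Q be a convex polytope in ℝ^D and let u, v be strictly antipodal vertices of Q. Then the difference u − v is uniquely formed in Q − Q: the only pair (a,b) ∈ Q × Q with a − b = u − v is (u, v). -/
open scoped Pointwise

noncomputable section

/-- If `u` and `v` are strictly antipodal vertices of a convex polytope
`Q`, then `u - v` is uniquely formed in `Q - Q`. -/
theorem stmt18 {D : ℕ} (Q : Set (Pt D)) (hQ : IsPolytope Q)
    (u v : Pt D) (hu : u ∈ Set.extremePoints ℝ Q) (hv : v ∈ Set.extremePoints ℝ Q)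
    (h : StrictlyAntipodal Q u v) :
    ∀ a ∈ Q, ∀ b ∈ Q, a - b = u - v → a = u ∧ b = v := by
  obtain ⟨f, hf0, hmax, hmin⟩ := h
  have hu' : u ∈ {x | x ∈ Q ∧ ∀ y ∈ Q, f y ≤ f x} := hmax ▸ rfl
  have hv' : v ∈ {x | x ∈ Q ∧ ∀ y ∈ Q, f x ≤ f y} := hmin ▸ rfl
  intro a ha b hb hab
  have h1 : f a ≤ f u := hu'.2 a ha
  have h2 : f v ≤ f b := hv'.2 b hb
  have h3 : f a - f b = f u - f v := by
    have := congrArg f hab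
    simpa [map_sub] using this
  have hfa : f a = f u := by linarith
  have hfb : f b = f v := by linarith
  have haU : a ∈ ({u} : Set (Pt D)) := by
    rw [← hmax]
    exact ⟨ha, fun y hy => (hu'.2 y hy).trans hfa.ge⟩
  have hbV : b ∈ ({v} : Set (Pt D)) := by
    rw [← hmin]
    exact ⟨hb, fun y hy => hfb.le.trans (hv'.2 y hy)⟩
  exact ⟨haU, hbV⟩
end
end

section
/- Let Q be a 2-dimensional convex polytope (convex polygon) in ℝ² with m vertices. Then Q is locally point symmetric if and only if the sides (edges) of Q can be grouped into exactly m/2 pairs of parallel sides. -/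
open scoped Pointwise

noncomputable section

namespace Stmt19

open Set

/-- The max-face of `Q` in direction `g`. -/
def Fmax (Q : Set (Pt 2)) (g : Pt 2 →ₗ[ℝ] ℝ) : Set (Pt 2) :=
  {x | x ∈ Q ∧ ∀ y ∈ Q, g y ≤ g x}

def Kc (Q : Set (Pt 2)) (v : Pt 2) : Set (Pt 2) :=
  ⋃ (l : ℝ) (_ : 0 ≤ l), l • (Q - ({v} : Set (Pt 2)))

lemma mem_Kc {Q : Set (Pt 2)} {v x : Pt 2} :
    x ∈ Kc Q v ↔ ∃ l : ℝ, 0 ≤ l ∧ ∃ q ∈ Q, x = l • (q - v) := by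
  simp only [Kc, Set.mem_iUnion, Set.sub_singleton, Set.mem_smul_set, Set.mem_image]
  constructor
  · rintro ⟨l, hl, y, ⟨q, hq, rfl⟩, rfl⟩
    exact ⟨l, hl, q, hq, rfl⟩
  · rintro ⟨l, hl, q, hq, rfl⟩
    exact ⟨l, hl, q - v, ⟨q, hq, rfl⟩, rfl⟩

lemma smul_mem_Kc {Q : Set (Pt 2)} {v x : Pt 2} {c : ℝ} (hc : 0 ≤ c) (hx : x ∈ Kc Q v) :
    c • x ∈ Kc Q v := by
  obtain ⟨l, hl, q, hq, rfl⟩ := mem_Kc.1 hx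
  exact mem_Kc.2 ⟨c * l, mul_nonneg hc hl, q, hq, (mul_smul c l _).symm⟩

lemma sub_mem_Kc {Q : Set (Pt 2)} {v : Pt 2} {q : Pt 2} (hq : q ∈ Q) : q - v ∈ Kc Q v :=
  mem_Kc.2 ⟨1, zero_le_one, q, hq, (one_smul ℝ _).symm⟩

lemma zero_mem_Kc {Q : Set (Pt 2)} {v : Pt 2} (hQ : Q.Nonempty) : (0 : Pt 2) ∈ Kc Q v := by
  obtain ⟨q, hq⟩ := hQ
  exact mem_Kc.2 ⟨0, le_refl 0, q, hq, (zero_smul ℝ _).symm⟩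

lemma suppCone_eq {Q : Set (Pt 2)} {v : Pt 2} : suppCone Q v = ({v} : Set (Pt 2)) + Kc Q v := rfl

lemma suppCone_sub_singleton {Q : Set (Pt 2)} {v : Pt 2} :
    suppCone Q v - ({v} : Set (Pt 2)) = Kc Q v := by
  ext x
  simp only [suppCone_eq, Set.mem_sub, Set.mem_add, Set.mem_singleton_iff]
  constructor
  · rintro ⟨a, ⟨b, rfl, k, hk, rfl⟩, c, rfl, rfl⟩
    simpa using hk
  · intro hx
    exact ⟨v + x, ⟨v, rfl, x, hx, rfl⟩, v, rfl, by abel⟩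

lemma singleton_sub_suppCone {Q : Set (Pt 2)} {v : Pt 2} :
    ({v} : Set (Pt 2)) - suppCone Q v = {x | -x ∈ Kc Q v} := by
  ext x
  simp only [suppCone_eq, Set.mem_sub, Set.mem_add, Set.mem_singleton_iff, Set.mem_setOf_eq]
  constructor
  · rintro ⟨a, rfl, b, ⟨c, rfl, k, hk, rfl⟩, rfl⟩
    simpa using hk
  · intro hx
    exact ⟨v, rfl, v + -x, ⟨v, rfl, -x, hx, rfl⟩, by abel⟩

lemma cone_cond_iff {Q : Set (Pt 2)} {u v : Pt 2} :
    suppCone Q u - ({u} : Set (Pt 2)) = ({v} : Set (Pt 2)) - suppCone Q v ↔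
      ∀ x, x ∈ Kc Q u ↔ -x ∈ Kc Q v := by
  rw [suppCone_sub_singleton, singleton_sub_suppCone]
  constructor
  · intro h x
    constructor
    · intro hx; have := h ▸ hx; exact this
    · intro hx; rw [h]; exact hx
  · intro h; ext x; exact h x

end Stmt19
namespace Stmt19

open Set Module

lemma finrank_ker_eq_one {g : Pt 2 →ₗ[ℝ] ℝ} (hg : g ≠ 0) :
    Module.finrank ℝ (LinearMap.ker g) = 1 := by
  have hsurj : Function.Surjective g := by
    obtain ⟨x, hx⟩ : ∃ x, g x ≠ 0 := by
      by_contra h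
      push_neg at h
      exact hg (LinearMap.ext fun x => h x)
    intro y
    exact ⟨(y / g x) • x, by simp [map_smul, div_mul_cancel₀ _ hx, smul_eq_mul]⟩
  have h1 : Module.finrank ℝ (LinearMap.range g) = 1 := by
    rw [LinearMap.range_eq_top.2 hsurj, finrank_top]
    exact Module.finrank_self ℝ
  have h2 := LinearMap.finrank_range_add_finrank_ker g
  rw [h1, finrank_euclideanSpace_fin] at h2
  omega

lemma exists_smul_of_ker_le {g h : Pt 2 →ₗ[ℝ] ℝ} (hg : g ≠ 0)
    (hker : LinearMap.ker g ≤ LinearMap.ker h) : ∃ c : ℝ, h = c • g := by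
  obtain ⟨w, hw⟩ : ∃ w, g w ≠ 0 := by
    by_contra hc
    push_neg at hc
    exact hg (LinearMap.ext fun x => hc x)
  refine ⟨h w / g w, LinearMap.ext fun x => ?_⟩
  have hmem : x - (g x / g w) • w ∈ LinearMap.ker g := by
    simp only [LinearMap.mem_ker, map_sub, map_smul, smul_eq_mul]
    field_simp; ring
  have := hker hmem
  simp only [LinearMap.mem_ker, map_sub, map_smul, smul_eq_mul] at this
  have hx : h x = g x / g w * h w := by linarith
  simp only [LinearMap.smul_apply, smul_eq_mul]
  rw [hx]; field_simp

lemma direction_eq_ker {S : Set (Pt 2)} {g : Pt 2 →ₗ[ℝ] ℝ} (hg : g ≠ 0) {a b : Pt 2}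
    (ha : a ∈ S) (hb : b ∈ S) (hab : a ≠ b) (hlev : ∀ x ∈ S, ∀ y ∈ S, g x = g y) :
    (affineSpan ℝ S).direction = LinearMap.ker g := by
  rw [direction_affineSpan]
  have hle : vectorSpan ℝ S ≤ LinearMap.ker g := by
    rw [vectorSpan_def]
    rw [Submodule.span_le]
    rintro v ⟨x, hx, y, hy, rfl⟩
    simp only [SetLike.mem_coe, LinearMap.mem_ker]
    show g (x - y) = 0
    rw [map_sub, hlev x hx y hy, sub_self]
  have hfk : Module.finrank ℝ (LinearMap.ker g) = 1 := finrank_ker_eq_one hg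
  have hne : vectorSpan ℝ S ≠ ⊥ := by
    intro hbot
    have : a -ᵥ b ∈ vectorSpan ℝ S := vsub_mem_vectorSpan ℝ ha hb
    rw [hbot, Submodule.mem_bot] at this
    exact hab (by rwa [vsub_eq_sub, sub_eq_zero] at this)
  have hpos : 1 ≤ Module.finrank ℝ (vectorSpan ℝ S) := by
    rcases Nat.eq_zero_or_pos (Module.finrank ℝ (vectorSpan ℝ S)) with h0 | h1
    · exact absurd (Submodule.finrank_eq_zero.1 h0) hne
    · exact h1
  exact Submodule.eq_of_le_of_finrank_le hle (hfk ▸ hpos)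

lemma finrank_direction_one {S : Set (Pt 2)} {g : Pt 2 →ₗ[ℝ] ℝ} (hg : g ≠ 0) {a b : Pt 2}
    (ha : a ∈ S) (hb : b ∈ S) (hab : a ≠ b) (hlev : ∀ x ∈ S, ∀ y ∈ S, g x = g y) :
    Module.finrank ℝ (affineSpan ℝ S).direction = 1 := by
  rw [direction_eq_ker hg ha hb hab hlev]
  exact finrank_ker_eq_one hg

end Stmt19
namespace Stmt19

open Set Module

variable {Q : Set (Pt 2)}

lemma q_convex (hQ : IsPolytope Q) : Convex ℝ Q := by
  obtain ⟨V, hVf, rfl⟩ := hQ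
  exact convex_convexHull ℝ V

lemma q_compact (hQ : IsPolytope Q) : IsCompact Q := by
  obtain ⟨V, hVf, rfl⟩ := hQ
  exact hVf.isCompact_convexHull ℝ

lemma vertex_finite (hQ : IsPolytope Q) : (Set.extremePoints ℝ Q).Finite := by
  obtain ⟨V, hVf, rfl⟩ := hQ
  exact hVf.subset (extremePoints_convexHull_subset)

lemma vertex_hull (hQ : IsPolytope Q) : Q = convexHull ℝ (Set.extremePoints ℝ Q) := by
  have h1 := closure_convexHull_extremePoints (q_compact hQ) (q_convex hQ)
  have h2 : IsClosed (convexHull ℝ (Set.extremePoints ℝ Q)) :=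
    (vertex_finite hQ).isClosed_convexHull ℝ
  rw [h2.closure_eq] at h1
  exact h1.symm

lemma q_nonempty (hdim : affineSpan ℝ Q = ⊤) : Q.Nonempty := by
  by_contra h
  rw [Set.not_nonempty_iff_eq_empty] at h
  rw [h] at hdim
  have : (affineSpan ℝ (∅ : Set (Pt 2)) : Set (Pt 2)) = ∅ := by
    simp
  rw [hdim] at this
  have : (0 : Pt 2) ∈ (⊤ : AffineSubspace ℝ (Pt 2)) := trivial
  simp_all

lemma exists_ne_of_dim (hdim : affineSpan ℝ Q = ⊤) (u : Pt 2) : ∃ q ∈ Q, q ≠ u := by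
  by_contra h
  push_neg at h
  have hsub : Q ⊆ {u} := fun q hq => h q hq
  have := affineSpan_mono ℝ hsub
  rw [hdim] at this
  have hd := AffineSubspace.direction_le this
  rw [AffineSubspace.direction_top, direction_affineSpan, vectorSpan_singleton] at hd
  have : (⊤ : Submodule ℝ (Pt 2)) = ⊥ := le_bot_iff.1 hd
  have hnt : Nontrivial (Pt 2) := inferInstance
  obtain ⟨x, y, hxy⟩ := hnt
  have hx : x ∈ (⊤ : Submodule ℝ (Pt 2)) := trivial
  have hy : y ∈ (⊤ : Submodule ℝ (Pt 2)) := trivial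
  rw [this, Submodule.mem_bot] at hx hy
  exact hxy (hx.trans hy.symm)

/-- transfer of linear bounds from generators to the hull -/
lemma forall_le_of_hull {V : Set (Pt 2)} (g : Pt 2 →ₗ[ℝ] ℝ) {c : ℝ}
    (h : ∀ q ∈ V, g q ≤ c) : ∀ y ∈ convexHull ℝ V, g y ≤ c := by
  intro y hy
  have hconv : Convex ℝ {x : Pt 2 | g x ≤ c} :=
    convex_halfSpace_le ⟨g.map_add, g.map_smul⟩ c
  exact convexHull_min h hconv hy

lemma forall_ge_of_hull {V : Set (Pt 2)} (g : Pt 2 →ₗ[ℝ] ℝ) {c : ℝ}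
    (h : ∀ q ∈ V, c ≤ g q) : ∀ y ∈ convexHull ℝ V, c ≤ g y := by
  intro y hy
  have hconv : Convex ℝ {x : Pt 2 | c ≤ g x} :=
    convex_halfSpace_ge ⟨g.map_add, g.map_smul⟩ c
  exact convexHull_min h hconv hy

lemma vdiff_nonempty (hQ : IsPolytope Q) (hdim : affineSpan ℝ Q = ⊤) (u : Pt 2) :
    (Set.extremePoints ℝ Q \ {u}).Nonempty := by
  by_contra h
  rw [Set.not_nonempty_iff_eq_empty, Set.diff_eq_empty] at h
  have hhull := vertex_hull hQ
  have : Q ⊆ {u} := by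
    rw [hhull]
    refine (convexHull_min h (convex_singleton u)).trans ?_
    exact fun x hx => hx
  obtain ⟨q, hq, hqu⟩ := exists_ne_of_dim hdim u
  exact hqu (this hq)

lemma not_mem_hull_diff (hQ : IsPolytope Q) {u : Pt 2} (hu : u ∈ Set.extremePoints ℝ Q) :
    u ∉ convexHull ℝ (Set.extremePoints ℝ Q \ {u}) := by
  intro hmem
  have hsubQ : convexHull ℝ (Set.extremePoints ℝ Q \ {u}) ⊆ Q :=
    convexHull_min (fun x hx => extremePoints_subset hx.1) (q_convex hQ)
  have h1 : u ∈ (convexHull ℝ (Set.extremePoints ℝ Q \ {u})).extremePoints ℝ :=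
    inter_extremePoints_subset_extremePoints_of_subset hsubQ ⟨hmem, hu⟩
  have h2 := extremePoints_convexHull_subset h1
  exact h2.2 rfl

/-- every point of `Q` decomposes along segments from `u` into the opposite hull -/
lemma mem_decomp (hQ : IsPolytope Q) (hdim : affineSpan ℝ Q = ⊤) {u : Pt 2}
    (hu : u ∈ Set.extremePoints ℝ Q) {y : Pt 2} (hy : y ∈ Q) :
    ∃ t : ℝ, 0 ≤ t ∧ t ≤ 1 ∧ ∃ z ∈ convexHull ℝ (Set.extremePoints ℝ Q \ {u}),
      y = (1 - t) • u + t • z := by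
  have hins : insert u (Set.extremePoints ℝ Q \ {u}) = Set.extremePoints ℝ Q := by
    rw [Set.insert_diff_singleton, Set.insert_eq_self.2 hu]
  have hhull := vertex_hull hQ
  rw [← hins, convexHull_insert (vdiff_nonempty hQ hdim u)] at hhull
  have hy' := hhull ▸ hy
  rw [mem_convexJoin] at hy'
  obtain ⟨a, ha, z, hz, hseg⟩ := hy'
  rw [Set.mem_singleton_iff] at ha
  subst ha
  rw [segment_eq_image] at hseg
  obtain ⟨t, ⟨ht0, ht1⟩, rfl⟩ := hseg
  exact ⟨t, ht0, ht1, z, hz, rfl⟩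

end Stmt19
namespace Stmt19

open Set Module

variable {Q : Set (Pt 2)}

/-- Every extreme point of a polytope is strictly exposed. -/
lemma exists_strict_support (hQ : IsPolytope Q) (hdim : affineSpan ℝ Q = ⊤) {u : Pt 2}
    (hu : u ∈ Set.extremePoints ℝ Q) :
    ∃ f : Pt 2 →ₗ[ℝ] ℝ, f ≠ 0 ∧ ∀ y ∈ Q, y ≠ u → f y < f u := by
  set K := convexHull ℝ (Set.extremePoints ℝ Q \ {u}) with hK
  have hKclosed : IsClosed K := ((vertex_finite hQ).diff).isClosed_convexHull ℝ
  have hKconv : Convex ℝ K := convex_convexHull ℝ _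
  obtain ⟨f, s, hfs, hsu⟩ :=
    geometric_hahn_banach_closed_point hKconv hKclosed (not_mem_hull_diff hQ hu)
  refine ⟨f.toLinearMap, ?_, ?_⟩
  · intro hf0
    obtain ⟨z, hz⟩ := vdiff_nonempty hQ hdim u
    have h1 : f z < s := hfs z (subset_convexHull ℝ _ hz)
    have h2 : (f : Pt 2 →ₗ[ℝ] ℝ) z = 0 := by rw [hf0]; rfl
    have h3 : (f : Pt 2 →ₗ[ℝ] ℝ) u = 0 := by rw [hf0]; rfl
    have : f z = 0 := h2
    have : f u = 0 := h3
    linarith [hfs z (subset_convexHull ℝ _ hz), hsu]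
  · intro y hy hyu
    obtain ⟨t, ht0, ht1, z, hz, rfl⟩ := mem_decomp hQ hdim hu hy
    have htpos : 0 < t := by
      rcases lt_or_eq_of_le ht0 with h | h
      · exact h
      · exfalso; apply hyu; rw [← h]; simp
    have hfz : f z < f u := lt_trans (hfs z hz) hsu
    have : f ((1 - t) • u + t • z) = (1 - t) * f u + t * f z := by
      simp [map_add, map_smul, smul_eq_mul]
    show f ((1 - t) • u + t • z) < f u
    rw [this]
    nlinarith

/-- The supporting cone at an extreme point is pointed. -/
lemma pointed {u : Pt 2} (hu : u ∈ Set.extremePoints ℝ Q) {x : Pt 2}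
    (h1 : x ∈ Kc Q u) (h2 : -x ∈ Kc Q u) : x = 0 := by
  obtain ⟨l, hl, q, hq, rfl⟩ := mem_Kc.1 h1
  obtain ⟨l', hl', q', hq', he⟩ := mem_Kc.1 h2
  rcases eq_or_lt_of_le hl with h | hlpos
  · rw [← h, zero_smul]
  rcases eq_or_lt_of_le hl' with h' | hl'pos
  · rw [← h', zero_smul] at he
    rw [neg_eq_zero] at he; exact he
  by_cases hqu : q = u
  · rw [hqu, sub_self, smul_zero]
  exfalso
  have h0 : l • (q - u) + l' • (q' - u) = 0 := by rw [← he]; abel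
  have hsum : l • q + l' • q' = (l + l') • u := by
    linear_combination (norm := module) h0
  have hL : 0 < l + l' := by linarith
  have hmem : u ∈ openSegment ℝ q q' := by
    refine ⟨l / (l + l'), l' / (l + l'), div_pos hlpos hL, div_pos hl'pos hL, ?_, ?_⟩
    · field_simp
    · have h3 : (l + l')⁻¹ • (l • q + l' • q') = (l + l')⁻¹ • ((l + l') • u) :=
        congrArg _ hsum
      rw [smul_add, smul_smul, smul_smul, smul_smul, inv_mul_cancel₀ hL.ne', one_smul] at h3
      have e1 : l / (l + l') = (l + l')⁻¹ * l := div_eq_inv_mul l (l + l')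
      have e2 : l' / (l + l') = (l + l')⁻¹ * l' := div_eq_inv_mul l' (l + l')
      rw [e1, e2, h3]
  exact hqu (hu.2 hq hq' hmem)
end Stmt19
namespace Stmt19

open Set Module

variable {Q : Set (Pt 2)}

lemma mem_coneOver {B : Set (Pt 2)} {x : Pt 2} :
    x ∈ ⋃ (l : ℝ) (_ : 0 ≤ l), l • B ↔ ∃ l : ℝ, 0 ≤ l ∧ ∃ b ∈ B, x = l • b := by
  simp only [Set.mem_iUnion, Set.mem_smul_set]
  constructor
  · rintro ⟨l, hl, b, hb, rfl⟩; exact ⟨l, hl, b, hb, rfl⟩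
  · rintro ⟨l, hl, b, hb, rfl⟩; exact ⟨l, hl, b, hb, rfl⟩

lemma convex_coneOver {B : Set (Pt 2)} (hB : Convex ℝ B) :
    Convex ℝ (⋃ (l : ℝ) (_ : 0 ≤ l), l • B) := by
  intro x hx y hy a b ha hb hab
  obtain ⟨l, hl, p, hp, rfl⟩ := mem_coneOver.1 hx
  obtain ⟨l', hl', p', hp', rfl⟩ := mem_coneOver.1 hy
  have hkey : a • l • p + b • l' • p' = (a * l) • p + (b * l') • p' := by
    rw [smul_smul, smul_smul]
  rw [hkey]
  set L := a * l + b * l' with hL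
  rcases eq_or_lt_of_le (by positivity : (0:ℝ) ≤ L) with h0 | hpos
  · have hal : a * l = 0 := by nlinarith [mul_nonneg ha hl, mul_nonneg hb hl']
    have hbl : b * l' = 0 := by nlinarith [mul_nonneg ha hl, mul_nonneg hb hl']
    rw [hal, hbl, zero_smul, zero_smul, add_zero]
    exact mem_coneOver.2 ⟨0, le_refl 0, p, hp, (zero_smul ℝ p).symm⟩
  · have hz : (a * l / L) • p + (b * l' / L) • p' ∈ B := by
      apply hB hp hp' (by positivity) (by positivity)
      field_simp; exact hL.symm
    refine mem_coneOver.2 ⟨L, hpos.le, _, hz, ?_⟩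
    rw [smul_add, smul_smul, smul_smul]
    congr 1 <;> [skip; skip] <;> congr 1 <;> field_simp
    
lemma isClosed_coneOver {B : Set (Pt 2)} (hBc : IsCompact B) (h0 : (0 : Pt 2) ∉ B) :
    IsClosed (⋃ (l : ℝ) (_ : 0 ≤ l), l • B) := by
  rcases B.eq_empty_or_nonempty with rfl | hne
  · simp
  obtain ⟨b₀, hb₀, hmin'⟩ := hBc.exists_isMinOn hne continuous_norm.continuousOn
  have hmin : ∀ y ∈ B, ‖b₀‖ ≤ ‖y‖ := fun y hy => hmin' hy
  have hδ : 0 < ‖b₀‖ := by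
    rw [norm_pos_iff]
    intro h; rw [h] at hb₀; exact h0 hb₀
  set δ := ‖b₀‖ with hδdef
  set C := ⋃ (l : ℝ) (_ : 0 ≤ l), l • B with hC
  apply isClosed_of_closure_subset
  intro x hx
  set R := ‖x‖ + 1 with hR
  set D := (fun p : ℝ × Pt 2 => p.1 • p.2) '' (Set.Icc (0:ℝ) (R/δ) ×ˢ B) with hD
  have hDcomp : IsCompact D := (isCompact_Icc.prod hBc).image continuous_smul
  have hDsub : D ⊆ C := by
    rintro _ ⟨⟨l, b⟩, ⟨⟨hl0, _⟩, hb⟩, rfl⟩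
    exact mem_coneOver.2 ⟨l, hl0, b, hb, rfl⟩
  have hxD : x ∈ closure D := by
    rw [mem_closure_iff] at hx ⊢
    intro o ho hxo
    obtain ⟨y, ⟨hyo, hyball⟩, hyC⟩ :=
      hx (o ∩ Metric.ball x 1) (ho.inter Metric.isOpen_ball) ⟨hxo, Metric.mem_ball_self one_pos⟩
    obtain ⟨l, hl, b, hb, rfl⟩ := mem_coneOver.1 hyC
    have hynorm : ‖l • b‖ ≤ R := by
      have : dist (l • b) x < 1 := Metric.mem_ball.1 hyball
      have := norm_sub_norm_le (l • b) x
      rw [← dist_eq_norm] at this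
      rw [hR]; linarith
    have hlR : l ≤ R / δ := by
      rw [le_div_iff₀ hδ]
      have h1 : l * δ ≤ l * ‖b‖ := mul_le_mul_of_nonneg_left (hmin b hb) hl
      have h2 : l * ‖b‖ = ‖l • b‖ := by
        rw [norm_smul, Real.norm_eq_abs, abs_of_nonneg hl]
      linarith
    exact ⟨l • b, hyo, ⟨(l, b), ⟨⟨hl, hlR⟩, hb⟩, rfl⟩⟩
  rw [hDcomp.isClosed.closure_eq] at hxD
  exact hDsub hxD

lemma Kc_eq_coneOver (hQ : IsPolytope Q) (hdim : affineSpan ℝ Q = ⊤) {u : Pt 2}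
    (hu : u ∈ Set.extremePoints ℝ Q) :
    Kc Q u = ⋃ (l : ℝ) (_ : 0 ≤ l),
      l • ((fun z => z - u) '' (convexHull ℝ (Set.extremePoints ℝ Q \ {u}))) := by
  ext x
  rw [mem_Kc, mem_coneOver]
  constructor
  · rintro ⟨l, hl, q, hq, rfl⟩
    obtain ⟨t, ht0, ht1, z, hz, rfl⟩ := mem_decomp hQ hdim hu hq
    refine ⟨l * t, mul_nonneg hl ht0, z - u, ⟨z, hz, rfl⟩, ?_⟩
    have : (1 - t) • u + t • z - u = t • (z - u) := by module
    rw [this, smul_smul]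
  · rintro ⟨l, hl, _, ⟨z, hz, rfl⟩, rfl⟩
    have hzQ : z ∈ Q :=
      convexHull_min (fun x hx => extremePoints_subset hx.1) (q_convex hQ) hz
    exact ⟨l, hl, z, hzQ, rfl⟩

lemma Kc_closed (hQ : IsPolytope Q) (hdim : affineSpan ℝ Q = ⊤) {u : Pt 2}
    (hu : u ∈ Set.extremePoints ℝ Q) : IsClosed (Kc Q u) := by
  rw [Kc_eq_coneOver hQ hdim hu]
  apply isClosed_coneOver
  · exact (((vertex_finite hQ).diff).isCompact_convexHull ℝ).image
      (continuous_id.sub continuous_const)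
  · rintro ⟨z, hz, hz0⟩
    rw [sub_eq_zero] at hz0
    exact not_mem_hull_diff hQ hu (hz0 ▸ hz)

lemma Kc_convex (hQ : IsPolytope Q) (hdim : affineSpan ℝ Q = ⊤) {u : Pt 2}
    (hu : u ∈ Set.extremePoints ℝ Q) : Convex ℝ (Kc Q u) := by
  rw [Kc_eq_coneOver hQ hdim hu]
  apply convex_coneOver
  have : ((fun z => z - u) '' (convexHull ℝ (Set.extremePoints ℝ Q \ {u})))
      = (fun z => -u + z) '' (convexHull ℝ (Set.extremePoints ℝ Q \ {u})) := by
    apply Set.image_congr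
    intro a _; abel
  rw [this]
  exact (convex_convexHull ℝ _).translate (-u)
end Stmt19
namespace Stmt19

open Set Module

variable {Q : Set (Pt 2)}

lemma Fmax_level {g : Pt 2 →ₗ[ℝ] ℝ} {x y : Pt 2} (hx : x ∈ Fmax Q g) (hy : y ∈ Fmax Q g) :
    g x = g y :=
  le_antisymm (hy.2 x hx.1) (hx.2 y hy.1)

lemma two_points_of_finrank_one {E : Set (Pt 2)}
    (h : Module.finrank ℝ (affineSpan ℝ E).direction = 1) :
    ∃ a ∈ E, ∃ b ∈ E, a ≠ b := by
  by_contra hc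
  push_neg at hc
  rcases E.eq_empty_or_nonempty with rfl | ⟨a, ha⟩
  · rw [show affineSpan ℝ (∅ : Set (Pt 2)) = ⊥ from AffineSubspace.span_empty ℝ (Pt 2) (Pt 2),
      AffineSubspace.direction_bot] at h
    simp at h
  · have hE : E = {a} := by
      apply Set.eq_singleton_iff_unique_mem.2 ⟨ha, fun b hb => hc b hb a ha⟩
    rw [hE] at h
    rw [direction_affineSpan, vectorSpan_singleton] at h
    simp at h

lemma nonconst (hdim : affineSpan ℝ Q = ⊤) {g : Pt 2 →ₗ[ℝ] ℝ} (hg : g ≠ 0) :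
    ∃ a ∈ Q, ∃ b ∈ Q, g a < g b := by
  by_contra hc
  push_neg at hc
  have hconst : ∀ a ∈ Q, ∀ b ∈ Q, g a = g b := fun a ha b hb =>
    le_antisymm (hc b hb a ha) (hc a ha b hb)
  have hle : vectorSpan ℝ Q ≤ LinearMap.ker g := by
    rw [vectorSpan_def, Submodule.span_le]
    rintro v ⟨x, hx, y, hy, rfl⟩
    simp only [SetLike.mem_coe, LinearMap.mem_ker]
    show g (x - y) = 0
    rw [map_sub, hconst x hx y hy, sub_self]
  have htop : vectorSpan ℝ Q = ⊤ := by
    rw [← direction_affineSpan, hdim, AffineSubspace.direction_top]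
  rw [htop, top_le_iff] at hle
  exact hg (LinearMap.ker_eq_top.1 hle)

lemma edge_has_vertex (hQ : IsPolytope Q) {E : Set (Pt 2)} (hE : IsEdge Q E) :
    ∃ u ∈ E, u ∈ Set.extremePoints ℝ Q := by
  obtain ⟨f, hf0, hEeq⟩ := hE.1
  have hExp : IsExposed ℝ Q E := by
    intro _
    exact ⟨LinearMap.toContinuousLinearMap f, hEeq⟩
  obtain ⟨a, ha, b, hb, hab⟩ := two_points_of_finrank_one hE.2
  have hcomp : IsCompact E := hExp.isCompact (q_compact hQ)
  obtain ⟨x, hx⟩ := hcomp.extremePoints_nonempty ⟨a, ha⟩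
  refine ⟨x, hx.1, ?_⟩
  exact (hExp.isExtreme).extremePoints_subset_extremePoints hx

/-- If `Q` is LPS and `Fmax Q f` is an edge, then the min-face contains two points. -/
lemma min_face_two_points (hQ : IsPolytope Q)
    (hLPS : LocallyPointSymmetric Q) {f : Pt 2 →ₗ[ℝ] ℝ}
    (hEedge : IsEdge Q (Fmax Q f)) :
    ∃ a ∈ {x | x ∈ Q ∧ ∀ y ∈ Q, f x ≤ f y}, ∃ b ∈ {x | x ∈ Q ∧ ∀ y ∈ Q, f x ≤ f y}, a ≠ b := by
  obtain ⟨σ, hσ⟩ := hLPS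
  obtain ⟨u, huE, huV⟩ := edge_has_vertex hQ hEedge
  obtain ⟨a, ha, b, hb, hab⟩ := two_points_of_finrank_one hEedge.2
  obtain ⟨w, hwE, hwu⟩ : ∃ w ∈ Fmax Q f, w ≠ u := by
    rcases eq_or_ne a u with rfl | h
    · exact ⟨b, hb, fun hbu => hab (hbu.symm ▸ rfl)⟩
    · exact ⟨a, ha, h⟩
  obtain ⟨hσV, hσne, hσinv, hσanti, hσcone⟩ := hσ u huV
  set v := σ u with hv
  have hcone : ∀ x, x ∈ Kc Q u ↔ -x ∈ Kc Q v := cone_cond_iff.1 hσcone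
  have hvQ : v ∈ Q := extremePoints_subset hσV
  -- v is a minimizer
  have hvmin : ∀ y ∈ Q, f v ≤ f y := by
    intro q hq
    have h1 : q - v ∈ Kc Q v := sub_mem_Kc hq
    have h2 : v - q ∈ Kc Q u := by
      rw [hcone (v - q)]
      simpa using h1
    obtain ⟨l, hl, p, hp, hpe⟩ := mem_Kc.1 h2
    have : f (v - q) = l * (f p - f u) := by
      rw [hpe]; simp [map_smul, map_sub, smul_eq_mul]
    have hfp : f p ≤ f u := huE.2 p hp
    have : f v - f q ≤ 0 := by
      rw [map_sub] at this
      nlinarith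
    linarith
  -- second minimizer
  have hwmem : w - u ∈ Kc Q u := by
    have : w ∈ Q := hwE.1
    exact sub_mem_Kc this
  have h2 : u - w ∈ Kc Q v := by
    have := (hcone (w - u)).1 hwmem
    simpa using this
  obtain ⟨l, hl, p, hp, hpe⟩ := mem_Kc.1 h2
  have hlne : l ≠ 0 := by
    intro h0
    rw [h0, zero_smul, sub_eq_zero] at hpe
    exact hwu hpe.symm
  have hlpos : 0 < l := lt_of_le_of_ne hl (Ne.symm hlne)
  have hfufw : f u = f w := Fmax_level huE hwE
  have hfp : f p = f v := by
    have h3 : f u - f w = l * (f p - f v) := by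
      have := congrArg f hpe
      rw [map_sub, map_smul, map_sub] at this
      simpa [smul_eq_mul] using this
    rw [← hfufw] at h3
    have : l * (f p - f v) = 0 := by linarith
    have := mul_eq_zero.1 this
    rcases this with h | h
    · exact absurd h hlne
    · linarith
  have hpmin : ∀ y ∈ Q, f p ≤ f y := by
    intro y hy; rw [hfp]; exact hvmin y hy
  have hpv : p ≠ v := by
    intro h
    rw [h, sub_self, smul_zero, sub_eq_zero] at hpe
    exact hwu hpe.symm
  exact ⟨v, ⟨hvQ, hvmin⟩, p, ⟨hp, hpmin⟩, fun h => hpv h.symm⟩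

end Stmt19
namespace Stmt19

open Set Module

variable {Q : Set (Pt 2)}

def Fmin (Q : Set (Pt 2)) (g : Pt 2 →ₗ[ℝ] ℝ) : Set (Pt 2) :=
  {x | x ∈ Q ∧ ∀ y ∈ Q, g x ≤ g y}

lemma Fmin_eq_Fmax_neg (g : Pt 2 →ₗ[ℝ] ℝ) : Fmin Q g = Fmax Q (-g) := by
  ext x
  simp only [Fmin, Fmax, Set.mem_setOf_eq, LinearMap.neg_apply, neg_le_neg_iff]

lemma Fmin_neg (g : Pt 2 →ₗ[ℝ] ℝ) : Fmin Q (-g) = Fmax Q g := by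
  rw [Fmin_eq_Fmax_neg, neg_neg]

lemma Fmax_nonempty (hQ : IsPolytope Q) (hdim : affineSpan ℝ Q = ⊤) (g : Pt 2 →ₗ[ℝ] ℝ) :
    (Fmax Q g).Nonempty := by
  obtain ⟨x, hx, hmax⟩ := (q_compact hQ).exists_isMaxOn (q_nonempty hdim)
    (LinearMap.continuous_of_finiteDimensional g).continuousOn
  exact ⟨x, hx, fun y hy => hmax hy⟩

/-- two functionals giving the same max edge give the same min face -/
lemma same_min (hdim : affineSpan ℝ Q = ⊤) {f g : Pt 2 →ₗ[ℝ] ℝ}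
    (hf : f ≠ 0) (hg : g ≠ 0) (hE : IsEdge Q (Fmax Q f)) (heq : Fmax Q f = Fmax Q g) :
    Fmin Q f = Fmin Q g := by
  obtain ⟨a, ha, b, hb, hab⟩ := two_points_of_finrank_one hE.2
  have hdirf : (affineSpan ℝ (Fmax Q f)).direction = LinearMap.ker f :=
    direction_eq_ker hf ha hb hab (fun x hx y hy => Fmax_level hx hy)
  have hdirg : (affineSpan ℝ (Fmax Q f)).direction = LinearMap.ker g := by
    rw [heq]
    rw [heq] at ha hb
    exact direction_eq_ker hg ha hb hab (fun x hx y hy => Fmax_level hx hy)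
  have hker : LinearMap.ker f ≤ LinearMap.ker g := by rw [← hdirf, hdirg]
  obtain ⟨c, hc⟩ := exists_smul_of_ker_le hf hker
  have hcne : c ≠ 0 := by
    intro h0; rw [h0, zero_smul] at hc; exact hg hc
  rcases lt_or_gt_of_ne hcne with hneg | hpos
  · exfalso
    have hgmax : Fmax Q g = Fmin Q f := by
      ext x
      simp only [Fmax, Fmin, Set.mem_setOf_eq, hc, LinearMap.smul_apply, smul_eq_mul]
      constructor
      · rintro ⟨hxQ, hx⟩
        exact ⟨hxQ, fun y hy => by nlinarith [hx y hy]⟩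
      · rintro ⟨hxQ, hx⟩
        exact ⟨hxQ, fun y hy => by nlinarith [hx y hy]⟩
    have haf : a ∈ Fmax Q f := ha
    have hamin : a ∈ Fmin Q f := by rw [← hgmax, ← heq]; exact ha
    obtain ⟨p, hp, q, hq, hpq⟩ := nonconst hdim hf
    have h1 : f q ≤ f a := haf.2 q hq
    have h2 : f a ≤ f p := hamin.2 p hp
    linarith
  · ext x
    simp only [Fmin, Set.mem_setOf_eq, hc, LinearMap.smul_apply, smul_eq_mul]
    constructor
    · rintro ⟨hxQ, hx⟩
      exact ⟨hxQ, fun y hy => by nlinarith [hx y hy]⟩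
    · rintro ⟨hxQ, hx⟩
      exact ⟨hxQ, fun y hy => by nlinarith [hx y hy]⟩

lemma min_face_edge_props (hQ : IsPolytope Q) (hdim : affineSpan ℝ Q = ⊤)
    (hLPS : LocallyPointSymmetric Q) {f : Pt 2 →ₗ[ℝ] ℝ} (hf : f ≠ 0)
    (hE : IsEdge Q (Fmax Q f)) :
    IsEdge Q (Fmin Q f) ∧ Fmin Q f ≠ Fmax Q f ∧
    (affineSpan ℝ (Fmin Q f)).direction = LinearMap.ker f ∧
    (affineSpan ℝ (Fmax Q f)).direction = LinearMap.ker f := by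
  obtain ⟨a, ha, b, hb, hab⟩ := min_face_two_points hQ hLPS hE
  have haM : a ∈ Fmin Q f := ha
  have hbM : b ∈ Fmin Q f := hb
  have hlevM : ∀ x ∈ Fmin Q f, ∀ y ∈ Fmin Q f, f x = f y := fun x hx y hy =>
    le_antisymm (hx.2 y hy.1) (hy.2 x hx.1)
  have hdirM : (affineSpan ℝ (Fmin Q f)).direction = LinearMap.ker f :=
    direction_eq_ker hf haM hbM hab hlevM
  have hMedge : IsEdge Q (Fmin Q f) := by
    constructor
    · exact ⟨-f, neg_ne_zero.2 hf, Fmin_eq_Fmax_neg f⟩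
    · rw [hdirM]; exact finrank_ker_eq_one hf
  obtain ⟨p, hp, q, hq, hpq⟩ := nonconst hdim hf
  have hMne : Fmin Q f ≠ Fmax Q f := by
    intro heq
    have haF : a ∈ Fmax Q f := heq ▸ haM
    have h1 : f q ≤ f a := haF.2 q hq
    have h2 : f a ≤ f p := haM.2 p hp
    linarith
  obtain ⟨a', ha', b', hb', hab'⟩ := two_points_of_finrank_one hE.2
  have hdirE : (affineSpan ℝ (Fmax Q f)).direction = LinearMap.ker f :=
    direction_eq_ker hf ha' hb' hab' (fun x hx y hy => Fmax_level hx hy)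
  exact ⟨hMedge, hMne, hdirM, hdirE⟩

lemma forward (hQ : IsPolytope Q) (hdim : affineSpan ℝ Q = ⊤)
    (hLPS : LocallyPointSymmetric Q) :
    ∃ σ : Set (Pt 2) → Set (Pt 2), ∀ E : Set (Pt 2), IsEdge Q E →
      IsEdge Q (σ E) ∧ σ E ≠ E ∧ σ (σ E) = E ∧
      (affineSpan ℝ (σ E)).direction = (affineSpan ℝ E).direction := by
  classical
  refine ⟨fun E => if h : IsEdge Q E then Fmin Q h.1.choose else ∅, ?_⟩
  set σ' : Set (Pt 2) → Set (Pt 2) :=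
    fun E => if h : IsEdge Q E then Fmin Q h.1.choose else ∅ with hσ'
  have key : ∀ (E : Set (Pt 2)) (hE : IsEdge Q E) (f : Pt 2 →ₗ[ℝ] ℝ),
      f ≠ 0 → E = Fmax Q f → σ' E = Fmin Q f := by
    intro E hEdge f hf hEf
    have hs := hEdge.1.choose_spec
    have h1 : E = Fmax Q hEdge.1.choose := hs.2
    have hmax : Fmax Q hEdge.1.choose = Fmax Q f := by rw [← h1, ← hEf]
    have hEe : IsEdge Q (Fmax Q hEdge.1.choose) := by rw [← h1]; exact hEdge
    have := same_min hdim hs.1 hf hEe hmax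
    rw [hσ']
    simp only [dif_pos hEdge]
    exact this
  intro E hE
  obtain ⟨f, hf0, hEeq⟩ := hE.1
  have hEF : E = Fmax Q f := hEeq
  have hE' : IsEdge Q (Fmax Q f) := by rw [← hEF]; exact hE
  have hσE : σ' E = Fmin Q f := key E hE f hf0 hEF
  obtain ⟨hMedge, hMne, hdirM, hdirE⟩ := min_face_edge_props hQ hdim hLPS hf0 hE'
  refine ⟨?_, ?_, ?_, ?_⟩
  · rw [hσE]; exact hMedge
  · rw [hσE, hEF]; exact hMne
  · have h2 : IsEdge Q (σ' E) := by rw [hσE]; exact hMedge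
    have h3 : σ' (σ' E) = Fmin Q (-f) :=
      key (σ' E) h2 (-f) (neg_ne_zero.2 hf0) (by rw [hσE, Fmin_eq_Fmax_neg])
    rw [h3, Fmin_neg, ← hEF]
  · rw [hσE, hdirM, hEF, hdirE]

end Stmt19
namespace Stmt19

open Set Module
open scoped RealInnerProductSpace

variable {Q : Set (Pt 2)}

def lf (w : Pt 2) : Pt 2 →ₗ[ℝ] ℝ := ((innerSL ℝ) w).toLinearMap

@[simp] lemma lf_apply (w x : Pt 2) : lf w x = ⟪w, x⟫ := rfl

lemma exists_inner_rep (g : Pt 2 →ₗ[ℝ] ℝ) : ∃ w : Pt 2, g = lf w := by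
  set G := LinearMap.toContinuousLinearMap g with hG
  refine ⟨(InnerProductSpace.toDual ℝ (Pt 2)).symm G, ?_⟩
  apply LinearMap.ext
  intro x
  have h := InnerProductSpace.toDual_symm_apply (𝕜 := ℝ) (E := Pt 2) (x := x) (y := G)
  simp only [lf_apply]
  rw [h]
  rfl

lemma lf_ne_zero {w : Pt 2} (hw : w ≠ 0) : lf w ≠ 0 := by
  intro h
  apply hw
  have : lf w w = 0 := by rw [h]; rfl
  rw [lf_apply, real_inner_self_eq_norm_sq] at this
  have : ‖w‖ = 0 := by nlinarith [norm_nonneg w]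
  rwa [norm_eq_zero] at this

lemma Fmax_singleton_of_strict {u : Pt 2} {g : Pt 2 →ₗ[ℝ] ℝ} (huQ : u ∈ Q)
    (hstrict : ∀ y ∈ Q, y ≠ u → g y < g u) : Fmax Q g = {u} := by
  ext x
  simp only [Fmax, Set.mem_setOf_eq, Set.mem_singleton_iff]
  constructor
  · rintro ⟨hxQ, hx⟩
    by_contra hxu
    exact absurd (hx u huQ) (not_le.2 (hstrict x hxQ hxu))
  · intro hxu
    rw [hxu]
    refine ⟨huQ, fun y hy => ?_⟩
    rcases eq_or_ne y u with rfl | hne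
    · exact le_refl _
    · exact (hstrict y hy hne).le

lemma Fmax_smul_pos {c : ℝ} (hc : 0 < c) (f : Pt 2 →ₗ[ℝ] ℝ) :
    Fmax Q (c • f) = Fmax Q f := by
  ext x
  simp only [Fmax, Set.mem_setOf_eq, LinearMap.smul_apply, smul_eq_mul]
  constructor
  · rintro ⟨hxQ, hx⟩
    exact ⟨hxQ, fun y hy => by nlinarith [hx y hy]⟩
  · rintro ⟨hxQ, hx⟩
    exact ⟨hxQ, fun y hy => by nlinarith [hx y hy]⟩

lemma Fmax_smul_neg {c : ℝ} (hc : c < 0) (f : Pt 2 →ₗ[ℝ] ℝ) :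
    Fmax Q (c • f) = Fmin Q f := by
  ext x
  simp only [Fmax, Fmin, Set.mem_setOf_eq, LinearMap.smul_apply, smul_eq_mul]
  constructor
  · rintro ⟨hxQ, hx⟩
    exact ⟨hxQ, fun y hy => by nlinarith [hx y hy]⟩
  · rintro ⟨hxQ, hx⟩
    exact ⟨hxQ, fun y hy => by nlinarith [hx y hy]⟩

lemma exists_min_vertex (hQ : IsPolytope Q) (hdim : affineSpan ℝ Q = ⊤)
    (g : Pt 2 →ₗ[ℝ] ℝ) : ∃ z ∈ Set.extremePoints ℝ Q, ∀ y ∈ Q, g z ≤ g y := by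
  have hVne : (Set.extremePoints ℝ Q).Nonempty := by
    obtain ⟨q, hq, hqne⟩ := exists_ne_of_dim hdim 0
    rcases Set.eq_empty_or_nonempty (Set.extremePoints ℝ Q) with h | h
    · exfalso
      have := vertex_hull hQ
      rw [h] at this
      simp only [convexHull_empty] at this
      rw [this] at hq
      exact hq
    · exact h
  obtain ⟨z, hz, hmin⟩ := Set.exists_min_image _ g (vertex_finite hQ) hVne
  refine ⟨z, hz, ?_⟩
  have := forall_ge_of_hull (V := Set.extremePoints ℝ Q) g (c := g z) hmin
  intro y hy
  exact this y ((vertex_hull hQ) ▸ hy)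

/-- Under the parallel-edge-pairing hypothesis, a strictly exposed point has a
strictly exposed antipodal point. -/
lemma min_face_singleton (hQ : IsPolytope Q) (hdim : affineSpan ℝ Q = ⊤)
    (hRHS : ∃ σ : Set (Pt 2) → Set (Pt 2), ∀ E : Set (Pt 2), IsEdge Q E →
      IsEdge Q (σ E) ∧ σ E ≠ E ∧ σ (σ E) = E ∧
      (affineSpan ℝ (σ E)).direction = (affineSpan ℝ E).direction)
    {w : Pt 2} {u : Pt 2} (huQ : u ∈ Q)
    (hstrict : ∀ y ∈ Q, y ≠ u → lf w y < lf w u) :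
    ∃ v ∈ Set.extremePoints ℝ Q, Fmin Q (lf w) = {v} := by
  have hlf0 : lf w ≠ 0 := by
    obtain ⟨q, hq, hqu⟩ := exists_ne_of_dim hdim u
    intro h
    have := hstrict q hq hqu
    rw [h] at this
    simp at this
  have hFu : Fmax Q (lf w) = {u} := Fmax_singleton_of_strict huQ hstrict
  obtain ⟨z, hzV, hzmin⟩ := exists_min_vertex hQ hdim (lf w)
  have hzmem : z ∈ Fmin Q (lf w) := ⟨extremePoints_subset hzV, hzmin⟩
  refine ⟨z, hzV, ?_⟩
  have hsub : ∀ x ∈ Fmin Q (lf w), x = z := by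
    by_contra hc
    push_neg at hc
    obtain ⟨x, hx, hxz⟩ := hc
    -- the min face is an edge
    have hlev : ∀ a ∈ Fmin Q (lf w), ∀ b ∈ Fmin Q (lf w), lf w a = lf w b :=
      fun a ha b hb => le_antisymm (ha.2 b hb.1) (hb.2 a ha.1)
    have hEedge : IsEdge Q (Fmin Q (lf w)) := by
      constructor
      · exact ⟨-(lf w), neg_ne_zero.2 hlf0, Fmin_eq_Fmax_neg (lf w)⟩
      · exact finrank_direction_one hlf0 hx hzmem hxz hlev
    obtain ⟨σE, hσ⟩ := hRHS
    obtain ⟨hedge2, hne2, _, hdireq⟩ := hσ _ hEedge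
    obtain ⟨h, hh0, hheq⟩ := hedge2.1
    obtain ⟨a, ha, b, hb, hab⟩ := two_points_of_finrank_one hedge2.2
    have hlevh : ∀ p ∈ σE (Fmin Q (lf w)), ∀ p' ∈ σE (Fmin Q (lf w)), h p = h p' := by
      intro p hp p' hp'
      rw [hheq] at hp hp'
      exact Fmax_level hp hp'
    have hdirh : (affineSpan ℝ (σE (Fmin Q (lf w)))).direction = LinearMap.ker h :=
      direction_eq_ker hh0 ha hb hab hlevh
    have hdirE : (affineSpan ℝ (Fmin Q (lf w))).direction = LinearMap.ker (lf w) :=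
      direction_eq_ker hlf0 hx hzmem hxz hlev
    have hker : LinearMap.ker (lf w) ≤ LinearMap.ker h := by
      rw [← hdirE, ← hdireq, hdirh]
    obtain ⟨c, hc⟩ := exists_smul_of_ker_le hlf0 hker
    have hcne : c ≠ 0 := by
      intro h0; rw [h0, zero_smul] at hc; exact hh0 hc
    rcases lt_or_gt_of_ne hcne with hneg | hpos
    · -- h = c • lf w with c < 0 : σE E = Fmin = E, contradiction
      apply hne2
      have h2 : σE (Fmin Q (lf w)) = Fmax Q h := hheq
      have h3 : Fmax Q h = Fmin Q (lf w) := by rw [hc]; exact Fmax_smul_neg hneg _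
      exact h2.trans h3
    · -- c > 0 : σE E = Fmax (lf w) = {u}, but it has two points
      have hFh : Fmax Q h = {u} := by
        rw [hc, Fmax_smul_pos hpos, hFu]
      have hFh' : {x | x ∈ Q ∧ ∀ y ∈ Q, h y ≤ h x} = ({u} : Set (Pt 2)) := hFh
      rw [hheq, hFh'] at ha hb
      exact hab (ha.trans hb.symm)
  ext x
  simp only [Set.mem_singleton_iff]
  exact ⟨fun hx => hsub x hx, fun hx => hx ▸ hzmem⟩

end Stmt19
namespace Stmt19

open Set Module
open scoped RealInnerProductSpace

variable {Q : Set (Pt 2)}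

def Tset (Q : Set (Pt 2)) (u : Pt 2) : Set (Pt 2) :=
  {w | ∀ q ∈ Set.extremePoints ℝ Q \ {u}, ⟪w, q - u⟫ < 0}

lemma Tset_convex (u : Pt 2) : Convex ℝ (Tset Q u) := by
  have : Tset Q u = ⋂ q ∈ Set.extremePoints ℝ Q \ {u}, {w : Pt 2 | ⟪w, q - u⟫ < 0} := by
    ext w
    simp [Tset, Set.mem_iInter]
  rw [this]
  refine convex_iInter₂ fun q _ => ?_
  have hlin : IsLinearMap ℝ (fun w : Pt 2 => (⟪w, q - u⟫ : ℝ)) := by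
    constructor
    · intro a b; rw [inner_add_left]
    · intro c a; rw [real_inner_smul_left]; rfl
  exact convex_halfSpace_lt hlin 0

lemma isOpen_strictIneq (hQ : IsPolytope Q) (z : Pt 2) (S : Set (Pt 2)) (hS : S.Finite) :
    IsOpen {w : Pt 2 | ∀ q ∈ S, 0 < ⟪w, q - z⟫} := by
  have : {w : Pt 2 | ∀ q ∈ S, 0 < ⟪w, q - z⟫}
      = ⋂ q ∈ S, {w : Pt 2 | 0 < ⟪w, q - z⟫} := by
    ext w; simp [Set.mem_iInter]
  rw [this]
  refine hS.isOpen_biInter fun q _ => ?_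
  exact isOpen_lt continuous_const (Continuous.inner continuous_id continuous_const)

lemma Tset_open (hQ : IsPolytope Q) (u : Pt 2) : IsOpen (Tset Q u) := by
  have : Tset Q u = ⋂ q ∈ Set.extremePoints ℝ Q \ {u}, {w : Pt 2 | ⟪w, q - u⟫ < 0} := by
    ext w; simp [Tset, Set.mem_iInter]
  rw [this]
  refine ((vertex_finite hQ).diff).isOpen_biInter fun q _ => ?_
  exact isOpen_lt (Continuous.inner continuous_id continuous_const) continuous_const

lemma strictmax_of_Tset (hQ : IsPolytope Q) (hdim : affineSpan ℝ Q = ⊤) {u : Pt 2}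
    (hu : u ∈ Set.extremePoints ℝ Q) {w : Pt 2} (hw : w ∈ Tset Q u) :
    ∀ y ∈ Q, y ≠ u → lf w y < lf w u := by
  obtain ⟨b, hbmem, hbmax⟩ := Set.exists_max_image (Set.extremePoints ℝ Q \ {u})
    (fun q => ⟪w, q⟫) ((vertex_finite hQ).diff) (vdiff_nonempty hQ hdim u)
  have hbu : ⟪w, b⟫ < ⟪w, u⟫ := by
    have := hw b hbmem
    rw [inner_sub_right] at this
    linarith
  intro y hy hyu
  obtain ⟨t, ht0, ht1, z, hz, rfl⟩ := mem_decomp hQ hdim hu hy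
  have htpos : 0 < t := by
    rcases lt_or_eq_of_le ht0 with h | h
    · exact h
    · exfalso; apply hyu; rw [← h]; simp
  have hzb : lf w z ≤ ⟪w, b⟫ := by
    refine forall_le_of_hull (lf w) (c := ⟪w, b⟫) ?_ z hz
    intro q hq
    exact hbmax q hq
  have hcalc : lf w ((1 - t) • u + t • z) = (1 - t) * ⟪w, u⟫ + t * lf w z := by
    rw [map_add, map_smul, map_smul, smul_eq_mul, smul_eq_mul]
    rfl
  rw [hcalc]
  simp only [lf_apply] at hzb ⊢
  nlinarith

lemma mem_Tset_of_add {u w w₀ : Pt 2} {t : ℝ}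
    (hw : ∀ y ∈ Q, lf w y ≤ lf w u) (hw₀ : w₀ ∈ Tset Q u) (ht : 0 < t) :
    w + t • w₀ ∈ Tset Q u := by
  intro q hq
  have h1 : ⟪w, q - u⟫ ≤ 0 := by
    have hqQ : q ∈ Q := extremePoints_subset hq.1
    have := hw q hqQ
    simp only [lf_apply] at this
    rw [inner_sub_right]
    linarith
  have h2 : ⟪w₀, q - u⟫ < 0 := hw₀ q hq
  rw [inner_add_left, real_inner_smul_left]
  nlinarith

lemma nonneg_of_forall_pos {a b : ℝ} (h : ∀ t : ℝ, 0 < t → 0 < a + t * b) : 0 ≤ a := by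
  by_contra hc
  push_neg at hc
  have hbpos : (0:ℝ) < |b| + 1 := by positivity
  have ht : 0 < -a / (2 * (|b| + 1)) := by
    apply div_pos (by linarith) (by linarith)
  have hh := h _ ht
  set t := -a / (2 * (|b| + 1)) with htdef
  have h1 : t * b ≤ t * |b| := mul_le_mul_of_nonneg_left (le_abs_self b) ht.le
  have h2 : t * (|b| + 1) = -a / 2 := by
    rw [htdef]; field_simp
  nlinarith

lemma strictmin_of_Fmin_singleton {w z : Pt 2} (hFmin : Fmin Q (lf w) = {z}) :
    ∀ q ∈ Set.extremePoints ℝ Q \ {z}, 0 < ⟪w, q - z⟫ := by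
  intro q hq
  have hzmem : z ∈ Fmin Q (lf w) := by rw [hFmin]; rfl
  have hqQ : q ∈ Q := extremePoints_subset hq.1
  have hle : ⟪w, z⟫ ≤ ⟪w, q⟫ := hzmem.2 q hqQ
  rw [inner_sub_right]
  rcases lt_or_eq_of_le hle with h | h
  · linarith
  · exfalso
    have : q ∈ Fmin Q (lf w) := by
      refine ⟨hqQ, fun y hy => ?_⟩
      have := hzmem.2 y hy
      simp only [lf_apply]
      rw [← h]
      exact this
    rw [hFmin] at this
    exact hq.2 this

lemma antipode_const (hQ : IsPolytope Q) (hdim : affineSpan ℝ Q = ⊤)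
    (hRHS : ∃ σ : Set (Pt 2) → Set (Pt 2), ∀ E : Set (Pt 2), IsEdge Q E →
      IsEdge Q (σ E) ∧ σ E ≠ E ∧ σ (σ E) = E ∧
      (affineSpan ℝ (σ E)).direction = (affineSpan ℝ E).direction)
    {u : Pt 2} (hu : u ∈ Set.extremePoints ℝ Q) {w₀ : Pt 2} (hw₀ : w₀ ∈ Tset Q u) :
    ∃ v ∈ Set.extremePoints ℝ Q,
      ∀ w ∈ Tset Q u, ∀ q ∈ Set.extremePoints ℝ Q \ {v}, 0 < ⟪w, q - v⟫ := by
  have huQ : u ∈ Q := extremePoints_subset hu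
  -- each w in Tset has a unique min vertex
  have hsingle : ∀ w ∈ Tset Q u, ∃ z ∈ Set.extremePoints ℝ Q, Fmin Q (lf w) = {z} :=
    fun w hw => min_face_singleton hQ hdim hRHS huQ (strictmax_of_Tset hQ hdim hu hw)
  obtain ⟨v₀, hv₀V, hv₀⟩ := hsingle w₀ hw₀
  refine ⟨v₀, hv₀V, ?_⟩
  by_contra hcon
  push_neg at hcon
  obtain ⟨w₁, hw₁T, q₁, hq₁, hq₁le⟩ := hcon
  obtain ⟨z₁, hz₁V, hz₁⟩ := hsingle w₁ hw₁T
  have hz₁ne : z₁ ≠ v₀ := by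
    intro h
    rw [h] at hz₁
    exact absurd (strictmin_of_Fmin_singleton hz₁ q₁ hq₁) (not_lt.2 hq₁le)
  -- preconnectedness argument
  set A : Set (Pt 2) := {w : Pt 2 | ∀ q ∈ Set.extremePoints ℝ Q \ {v₀}, 0 < ⟪w, q - v₀⟫}
    with hA
  set B : Set (Pt 2) := ⋃ z ∈ Set.extremePoints ℝ Q \ {v₀},
    {w : Pt 2 | ∀ q ∈ Set.extremePoints ℝ Q \ {z}, 0 < ⟪w, q - z⟫} with hB
  have hAopen : IsOpen A := isOpen_strictIneq hQ v₀ _ ((vertex_finite hQ).diff)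
  have hBopen : IsOpen B := isOpen_biUnion fun z _ =>
    isOpen_strictIneq hQ z _ ((vertex_finite hQ).diff)
  have hcover : Tset Q u ⊆ A ∪ B := by
    intro w hw
    obtain ⟨z, hzV, hz⟩ := hsingle w hw
    rcases eq_or_ne z v₀ with rfl | hne
    · left
      exact strictmin_of_Fmin_singleton hz
    · right
      exact Set.mem_biUnion ⟨hzV, hne⟩ (strictmin_of_Fmin_singleton hz)
  have hTA : (Tset Q u ∩ A).Nonempty := ⟨w₀, hw₀, strictmin_of_Fmin_singleton hv₀⟩
  have hTB : (Tset Q u ∩ B).Nonempty :=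
    ⟨w₁, hw₁T, Set.mem_biUnion ⟨hz₁V, hz₁ne⟩ (strictmin_of_Fmin_singleton hz₁)⟩
  obtain ⟨w₂, hw₂T, hw₂A, hw₂B⟩ :=
    (Tset_convex u).isPreconnected A B hAopen hBopen hcover hTA hTB
  obtain ⟨z₂, hz₂, hw₂z⟩ := Set.mem_iUnion₂.1 hw₂B
  have h1 : 0 < ⟪w₂, z₂ - v₀⟫ := hw₂A z₂ hz₂
  have h2 : 0 < ⟪w₂, v₀ - z₂⟫ := hw₂z v₀ ⟨hv₀V, fun h => hz₂.2 h.symm⟩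
  have : v₀ - z₂ = -(z₂ - v₀) := by abel
  rw [this, inner_neg_right] at h2
  linarith

lemma np_of (hQ : IsPolytope Q) {u v : Pt 2} {w₀ : Pt 2} (hw₀ : w₀ ∈ Tset Q u)
    (hconst : ∀ w ∈ Tset Q u, ∀ q ∈ Set.extremePoints ℝ Q \ {v}, 0 < ⟪w, q - v⟫) :
    ∀ g : Pt 2 →ₗ[ℝ] ℝ, (∀ y ∈ Q, g y ≤ g u) → ∀ y ∈ Q, g v ≤ g y := by
  intro g hg
  obtain ⟨w, rfl⟩ := exists_inner_rep g
  have hVb : ∀ q ∈ Set.extremePoints ℝ Q \ {v}, 0 ≤ ⟪w, q - v⟫ := by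
    intro q hq
    apply nonneg_of_forall_pos (b := ⟪w₀, q - v⟫)
    intro t ht
    have hmem := mem_Tset_of_add hg hw₀ ht
    have := hconst _ hmem q hq
    rw [inner_add_left, real_inner_smul_left] at this
    linarith
  have hAllV : ∀ q ∈ Set.extremePoints ℝ Q, ⟪w, v⟫ ≤ ⟪w, q⟫ := by
    intro q hqV
    rcases eq_or_ne q v with rfl | hne
    · exact le_refl _
    · have := hVb q ⟨hqV, hne⟩
      rw [inner_sub_right] at this
      linarith
  intro y hy
  exact forall_ge_of_hull (lf w) hAllV y ((vertex_hull hQ) ▸ hy)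

lemma exists_antipode (hQ : IsPolytope Q) (hdim : affineSpan ℝ Q = ⊤)
    (hRHS : ∃ σ : Set (Pt 2) → Set (Pt 2), ∀ E : Set (Pt 2), IsEdge Q E →
      IsEdge Q (σ E) ∧ σ E ≠ E ∧ σ (σ E) = E ∧
      (affineSpan ℝ (σ E)).direction = (affineSpan ℝ E).direction)
    {u : Pt 2} (hu : u ∈ Set.extremePoints ℝ Q) :
    ∃ v, v ∈ Set.extremePoints ℝ Q ∧
      (∀ g : Pt 2 →ₗ[ℝ] ℝ, (∀ y ∈ Q, g y ≤ g u) → ∀ y ∈ Q, g v ≤ g y) ∧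
      (∀ g : Pt 2 →ₗ[ℝ] ℝ, (∀ y ∈ Q, g y ≤ g v) → ∀ y ∈ Q, g u ≤ g y) := by
  obtain ⟨f, hf0, hfstrict⟩ := exists_strict_support hQ hdim hu
  obtain ⟨w₀, rfl⟩ := exists_inner_rep f
  have hw₀T : w₀ ∈ Tset Q u := by
    intro q hq
    have hqQ : q ∈ Q := extremePoints_subset hq.1
    have := hfstrict q hqQ hq.2
    simp only [lf_apply] at this
    rw [inner_sub_right]
    linarith
  obtain ⟨v₀, hv₀V, hconst⟩ := antipode_const hQ hdim hRHS hu hw₀T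
  have hNp1 := np_of hQ hw₀T hconst
  -- reverse direction
  have hmw₀T : -w₀ ∈ Tset Q v₀ := by
    intro q hq
    have := hconst w₀ hw₀T q hq
    rw [inner_neg_left]
    linarith
  obtain ⟨v₁, hv₁V, hconst'⟩ := antipode_const hQ hdim hRHS hv₀V hmw₀T
  have hv₁u : v₁ = u := by
    by_contra hne
    have h1 : 0 < ⟪-w₀, u - v₁⟫ := hconst' _ hmw₀T u ⟨hu, Ne.symm hne⟩
    have h2 : ⟪w₀, v₁ - u⟫ < 0 := hw₀T v₁ ⟨hv₁V, fun h => hne h⟩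
    rw [inner_neg_left] at h1
    have : u - v₁ = -(v₁ - u) := by abel
    rw [this, inner_neg_right] at h1
    linarith
  have hNp2 := np_of hQ hmw₀T hconst'
  rw [hv₁u] at hNp2
  exact ⟨v₀, hv₀V, hNp1, hNp2⟩

end Stmt19
namespace Stmt19

open Set Module
open scoped RealInnerProductSpace

variable {Q : Set (Pt 2)}

lemma sub_mem_Kc_of_np (hQ : IsPolytope Q) (hdim : affineSpan ℝ Q = ⊤) {u v : Pt 2}
    (hv : v ∈ Set.extremePoints ℝ Q)
    (hnp : ∀ g : Pt 2 →ₗ[ℝ] ℝ, (∀ y ∈ Q, g y ≤ g v) → ∀ y ∈ Q, g u ≤ g y) :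
    ∀ q ∈ Q, u - q ∈ Kc Q v := by
  intro q hq
  by_contra hnot
  obtain ⟨g, s, hgs, hsg⟩ :=
    geometric_hahn_banach_closed_point (Kc_convex hQ hdim hv) (Kc_closed hQ hdim hv) hnot
  have hs0 : 0 < s := by
    have := hgs 0 (zero_mem_Kc (q_nonempty hdim))
    simpa using this
  have hgle : ∀ a ∈ Kc Q v, g a ≤ 0 := by
    intro a ha
    by_contra hpos
    push_neg at hpos
    have hmem := smul_mem_Kc (c := 2 * s / g a) (by positivity) ha
    have h2 := hgs _ hmem
    rw [map_smul, smul_eq_mul] at h2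
    rw [div_mul_cancel₀] at h2
    · linarith
    · exact ne_of_gt hpos
  have hvmax : ∀ y ∈ Q, g.toLinearMap y ≤ g.toLinearMap v := by
    intro y hy
    have := hgle (y - v) (sub_mem_Kc hy)
    rw [map_sub] at this
    simp only [ContinuousLinearMap.coe_coe]
    linarith
  have hq2 := hnp g.toLinearMap hvmax q hq
  simp only [ContinuousLinearMap.coe_coe] at hq2
  have hlast : g (u - q) ≤ 0 := by rw [map_sub]; linarith
  linarith

lemma cone_eq (hQ : IsPolytope Q) (hdim : affineSpan ℝ Q = ⊤) {u v : Pt 2}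
    (hu : u ∈ Set.extremePoints ℝ Q) (hv : v ∈ Set.extremePoints ℝ Q)
    (hnp1 : ∀ g : Pt 2 →ₗ[ℝ] ℝ, (∀ y ∈ Q, g y ≤ g u) → ∀ y ∈ Q, g v ≤ g y)
    (hnp2 : ∀ g : Pt 2 →ₗ[ℝ] ℝ, (∀ y ∈ Q, g y ≤ g v) → ∀ y ∈ Q, g u ≤ g y) :
    ∀ x, x ∈ Kc Q u ↔ -x ∈ Kc Q v := by
  intro x
  constructor
  · intro hx
    obtain ⟨l, hl, p, hp, rfl⟩ := mem_Kc.1 hx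
    have h1 : u - p ∈ Kc Q v := sub_mem_Kc_of_np hQ hdim hv hnp2 p hp
    have : -(l • (p - u)) = l • (u - p) := by rw [← smul_neg, neg_sub]
    rw [this]
    exact smul_mem_Kc hl h1
  · intro hx
    obtain ⟨l, hl, p, hp, hpe⟩ := mem_Kc.1 hx
    have h1 : v - p ∈ Kc Q u := sub_mem_Kc_of_np hQ hdim hu hnp1 p hp
    have hxe : x = l • (v - p) := by
      have : x = -(l • (p - v)) := by rw [← hpe, neg_neg]
      rw [this, ← smul_neg, neg_sub]
    rw [hxe]
    exact smul_mem_Kc hl h1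

lemma strict_of (hQ : IsPolytope Q) (hdim : affineSpan ℝ Q = ⊤) {u v : Pt 2}
    (hu : u ∈ Set.extremePoints ℝ Q) (hv : v ∈ Set.extremePoints ℝ Q)
    (hcone : ∀ x, x ∈ Kc Q u ↔ -x ∈ Kc Q v) : StrictlyAntipodal Q u v := by
  obtain ⟨f, hf0, hstrict⟩ := exists_strict_support hQ hdim hu
  have huQ := extremePoints_subset hu
  have hvQ := extremePoints_subset hv
  refine ⟨f, hf0, Fmax_singleton_of_strict huQ hstrict, ?_⟩
  have hKu : ∀ z ∈ Kc Q u, f z ≤ 0 := by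
    intro z hz
    obtain ⟨l, hl, p, hp, rfl⟩ := mem_Kc.1 hz
    have hfp : f p ≤ f u := by
      rcases eq_or_ne p u with rfl | hne
      · exact le_refl _
      · exact (hstrict p hp hne).le
    rw [map_smul, map_sub, smul_eq_mul]
    nlinarith
  have hvmin : ∀ y ∈ Q, f v ≤ f y := by
    intro y hy
    have h1 : v - y ∈ Kc Q u := by
      rw [hcone]
      have : -(v - y) = y - v := by abel
      rw [this]
      exact sub_mem_Kc hy
    have := hKu _ h1
    rw [map_sub] at this
    linarith
  ext x
  simp only [Set.mem_setOf_eq, Set.mem_singleton_iff]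
  constructor
  · rintro ⟨hxQ, hxmin⟩
    have hfx : f x = f v := le_antisymm (hxmin v hvQ) (hvmin x hxQ)
    have h1 : v - x ∈ Kc Q u := by
      rw [hcone]
      have : -(v - x) = x - v := by abel
      rw [this]
      exact sub_mem_Kc hxQ
    obtain ⟨l, hl, p, hp, hpe⟩ := mem_Kc.1 h1
    rcases eq_or_lt_of_le hl with h | hlpos
    · rw [← h, zero_smul] at hpe
      rw [sub_eq_zero] at hpe
      exact hpe.symm
    · have h0 : l * (f p - f u) = 0 := by
        have hc := congrArg f hpe
        rw [map_sub, map_smul, map_sub, smul_eq_mul] at hc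
        rw [← hc, hfx]
        ring
      have hfp : f p = f u := by
        rcases mul_eq_zero.1 h0 with h | h
        · exact absurd h (ne_of_gt hlpos)
        · linarith
      have hpu : p = u := by
        by_contra hne
        exact absurd hfp (ne_of_lt (hstrict p hp hne))
      rw [hpu, sub_self, smul_zero, sub_eq_zero] at hpe
      exact hpe.symm
  · intro hx
    rw [hx]
    exact ⟨hvQ, hvmin⟩

lemma backward (hQ : IsPolytope Q) (hdim : affineSpan ℝ Q = ⊤)
    (hRHS : ∃ σ : Set (Pt 2) → Set (Pt 2), ∀ E : Set (Pt 2), IsEdge Q E →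
      IsEdge Q (σ E) ∧ σ E ≠ E ∧ σ (σ E) = E ∧
      (affineSpan ℝ (σ E)).direction = (affineSpan ℝ E).direction) :
    LocallyPointSymmetric Q := by
  classical
  refine ⟨fun u => if h : u ∈ Set.extremePoints ℝ Q then
    (exists_antipode hQ hdim hRHS h).choose else u, ?_⟩
  intro v hv
  simp only [dif_pos hv]
  obtain ⟨hv'V, hnp1, hnp2⟩ := (exists_antipode hQ hdim hRHS hv).choose_spec
  have hcone : ∀ x, x ∈ Kc Q v ↔ -x ∈ Kc Q (exists_antipode hQ hdim hRHS hv).choose :=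
    cone_eq hQ hdim hv hv'V hnp1 hnp2
  have hne : (exists_antipode hQ hdim hRHS hv).choose ≠ v := by
    intro heq
    obtain ⟨q, hq, hqv⟩ := exists_ne_of_dim hdim v
    have h1 : q - v ∈ Kc Q v := sub_mem_Kc hq
    have h2 : -(q - v) ∈ Kc Q v := by
      have := (hcone (q - v)).1 h1
      rwa [heq] at this
    have := pointed hv h1 h2
    rw [sub_eq_zero] at this
    exact hqv this
  refine ⟨hv'V, hne, ?_, strict_of hQ hdim hv hv'V hcone, cone_cond_iff.2 hcone⟩
  simp only [dif_pos hv'V]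
  obtain ⟨hv''V, hnp1', hnp2'⟩ := (exists_antipode hQ hdim hRHS hv'V).choose_spec
  have hcone' : ∀ x, x ∈ Kc Q (exists_antipode hQ hdim hRHS hv).choose ↔
      -x ∈ Kc Q (exists_antipode hQ hdim hRHS hv'V).choose :=
    cone_eq hQ hdim hv'V hv''V hnp1' hnp2'
  have hKeq : ∀ x, x ∈ Kc Q v ↔ x ∈ Kc Q (exists_antipode hQ hdim hRHS hv'V).choose := by
    intro x
    rw [hcone x, hcone' (-x), neg_neg]
  have h1 : (exists_antipode hQ hdim hRHS hv'V).choose - v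
      ∈ Kc Q (exists_antipode hQ hdim hRHS hv'V).choose := by
    rw [← hKeq]
    exact sub_mem_Kc (extremePoints_subset hv''V)
  have h2 : v - (exists_antipode hQ hdim hRHS hv'V).choose
      ∈ Kc Q (exists_antipode hQ hdim hRHS hv'V).choose :=
    sub_mem_Kc (extremePoints_subset hv)
  have h3 := pointed hv''V h2 (by
    rw [show -(v - (exists_antipode hQ hdim hRHS hv'V).choose)
      = (exists_antipode hQ hdim hRHS hv'V).choose - v by abel]
    exact h1)
  rw [sub_eq_zero] at h3
  exact h3.symm

end Stmt19

/-- A (full-dimensional) convex polygon `Q ⊆ ℝ²` with `m` vertices is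
locally point symmetric if and only if its sides can be grouped into exactly `m/2` pairs
of parallel sides (i.e. there is a fixed-point-free involution pairing each side with a
distinct parallel side). -/
theorem stmt19 (Q : Set (Pt 2)) (hQ : IsPolytope Q)
    (hdim : affineSpan ℝ Q = ⊤) (m : ℕ) (hm : (Set.extremePoints ℝ Q).ncard = m) :
    LocallyPointSymmetric Q ↔
      ∃ σ : Set (Pt 2) → Set (Pt 2), ∀ E : Set (Pt 2), IsEdge Q E →
        IsEdge Q (σ E) ∧ σ E ≠ E ∧ σ (σ E) = E ∧
        (affineSpan ℝ (σ E)).direction = (affineSpan ℝ E).direction := by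
  constructor
  · intro h
    exact Stmt19.forward hQ hdim h
  · intro h
    exact Stmt19.backward hQ hdim h
end
end
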